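/- arXiv:math/0306179 — 4 statements merged into one kernel-verified Lean document; each statement's English description precedes it below -/
import Mathlib

section
/- Let S be a cofibrantly generated model category and (A, B) ↪ (C, D) a full inclusion of pairs of small categories (A a full subcategory of C with B ⊆ D). Assume A is left absorbant in C, i.e. for every morphism c → a in C with a ∈ A the object c also lies in A, and assume D ∩ A = B. Then the restriction functor res_A^C and its right adjoint ext_A^C form a Quillen adjunction res_A^C : U_S(C,D) ⇄ U_S(A,B) : ext_A^C. In particular, the restriction to A of a D-cofibrant object is B-cofibrant, and res_A^C preserves cofibrations, fibrations and weak equivalences. -/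
/-! Preliminaries: basic notions of homotopical algebra (lifting properties,
model structures, transfinite compositions, relative cell complexes, smallness,
cofibrant generation) and the relative model structure `U_S(C,D)` on functor
categories, following Balmer–Matthey, "Codescent theory I". -/

universe w v u u₂ u₃

open CategoryTheory Limits

namespace Codescent

set_option linter.dupNamespace false

section Lifting

variable {M : Type u} [Category.{v} M]

/-- The class of morphisms having the left lifting property with respect to all
morphisms in `K`. -/
def llp (K : MorphismProperty M) : MorphismProperty M :=
  fun _ _ f => ∀ ⦃X Y : M⦄ (g : X ⟶ Y), K g → HasLiftingProperty f g

/-- The class of morphisms having the right lifting property with respect to all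
morphisms in `K`. -/
def rlp (K : MorphismProperty M) : MorphismProperty M :=
  fun _ _ g => ∀ ⦃A B : M⦄ (f : A ⟶ B), K f → HasLiftingProperty f g

/-- Intersection of two classes of morphisms. -/
def inter (P Q : MorphismProperty M) : MorphismProperty M :=
  fun _ _ f => P f ∧ Q f

/-- `f` is a retract of `g` (as objects of the arrow category). -/
def RetractHom {X Y X' Y' : M} (f : X ⟶ Y) (g : X' ⟶ Y') : Prop :=
  ∃ (i : Arrow.mk f ⟶ Arrow.mk g) (r : Arrow.mk g ⟶ Arrow.mk f), i ≫ r = 𝟙 (Arrow.mk f)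

/-- The object `c` is a retract of the object `d`. -/
def IsRetractObj (c d : M) : Prop :=
  ∃ (i : c ⟶ d) (r : d ⟶ c), i ≫ r = 𝟙 c

/-- A functorial factorization of every morphism as a morphism in `L` followed by
a morphism in `R`. -/
structure FunctorialFact (L R : MorphismProperty M) where
  Z : Arrow M ⥤ M
  ι : (Arrow.leftFunc : Arrow M ⥤ M) ⟶ Z
  π : Z ⟶ (Arrow.rightFunc : Arrow M ⥤ M)
  fac : ∀ f : Arrow M, ι.app f ≫ π.app f = f.hom
  mem_left : ∀ f : Arrow M, L (ι.app f)
  mem_right : ∀ f : Arrow M, R (π.app f)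

end Lifting

/-- A (Quillen) model structure on a category `M`: classes of weak equivalences,
cofibrations and fibrations satisfying MC2–MC5 (MC1, completeness and
cocompleteness, is imposed separately as `HasLimits`/`HasColimits`). -/
structure ModelStructure (M : Type u) [Category.{v} M] where
  weq : MorphismProperty M
  cof : MorphismProperty M
  fib : MorphismProperty M
  /-- MC2, two-out-of-three -/
  weq_comp : ∀ {X Y Z : M} (f : X ⟶ Y) (g : Y ⟶ Z), weq f → weq g → weq (f ≫ g)
  weq_cancel_left : ∀ {X Y Z : M} (f : X ⟶ Y) (g : Y ⟶ Z), weq f → weq (f ≫ g) → weq g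
  weq_cancel_right : ∀ {X Y Z : M} (f : X ⟶ Y) (g : Y ⟶ Z), weq g → weq (f ≫ g) → weq f
  /-- MC3, closure under retracts -/
  weq_retract : ∀ {X Y X' Y' : M} (f : X ⟶ Y) (g : X' ⟶ Y'), RetractHom f g → weq g → weq f
  cof_retract : ∀ {X Y X' Y' : M} (f : X ⟶ Y) (g : X' ⟶ Y'), RetractHom f g → cof g → cof f
  fib_retract : ∀ {X Y X' Y' : M} (f : X ⟶ Y) (g : X' ⟶ Y'), RetractHom f g → fib g → fib f
  /-- MC4, lifting -/
  cof_lift : ∀ {A B X Y : M} (f : A ⟶ B) (g : X ⟶ Y),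
    cof f → weq g → fib g → HasLiftingProperty f g
  fib_lift : ∀ {A B X Y : M} (f : A ⟶ B) (g : X ⟶ Y),
    weq f → cof f → fib g → HasLiftingProperty f g
  /-- MC5, functorial factorizations -/
  fact₁ : FunctorialFact (M := M) cof (inter weq fib)
  fact₂ : FunctorialFact (M := M) (inter weq cof) fib

section Transfinite

/-- A well-ordered type (with bottom element and successors), the index for
transfinite compositions (a "λ-sequence" index). -/
structure WOType : Type (w + 1) where
  carrier : Type w
  [lin : LinearOrder carrier]
  [succ : SuccOrder carrier]
  [bot : OrderBot carrier]
  [wf : WellFoundedLT carrier]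

attribute [instance] WOType.lin WOType.succ WOType.bot WOType.wf

variable {M : Type u} [Category.{v} M] {N : Type u₂} [Category.{v} N]

/-- The class of pushouts of morphisms of `K`. -/
def pushoutsOf (K : MorphismProperty M) : MorphismProperty M :=
  fun X Y f => ∃ (A B : M) (g : A ⟶ B) (t : A ⟶ X) (b : B ⟶ Y), K g ∧ IsPushout g t b f

/-- The inclusion functor of `{i // i < j}` into a preorder `J`. -/
def iioIncl {J : Type w} [Preorder J] (j : J) : {i : J // i < j} ⥤ J where
  obj i := i.1
  map {i i'} h := homOfLE (Subtype.coe_le_coe.mpr (leOfHom h))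

/-- The cocone on the restriction of `F : J ⥤ M` to `{i // i < j}` with apex `F.obj j`. -/
def iioCocone {J : Type w} [Preorder J] (F : J ⥤ M) (j : J) : Cocone (iioIncl j ⋙ F) where
  pt := F.obj j
  ι :=
    { app := fun i => F.map (homOfLE i.2.le)
      naturality := fun i i' h => by
        dsimp
        rw [Category.comp_id, ← F.map_comp]
        rfl }

/-- `F : J ⥤ M` is a (continuous) transfinite sequence all of whose successor
maps lie in the class `P`. -/
structure IsChainOf (P : MorphismProperty M) {J : Type w} [LinearOrder J] [SuccOrder J]
    (F : J ⥤ M) : Prop where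
  succ_mem : ∀ j : J, ¬ IsMax j → P (F.map (homOfLE (Order.le_succ j)))
  limit_isColimit : ∀ j : J, Order.IsSuccLimit j → Nonempty (IsColimit (iioCocone F j))

/-- The class of relative `K`-cells: transfinite compositions of pushouts of
morphisms of `K`. -/
def cell (K : MorphismProperty M) : MorphismProperty M :=
  fun X Y f => ∃ (J : WOType.{v}) (F : J.carrier ⥤ M)
    (_ : IsChainOf (pushoutsOf K) F) (c : Cocone F) (_ : IsColimit c)
    (e : X ≅ F.obj ⊥) (e' : c.pt ≅ Y), f = e.hom ≫ c.ι.app ⊥ ≫ e'.hom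

/-- A linear order is `κ`-filtered when it has no top element and every subset of
cardinality at most `κ` is bounded above. -/
def KFiltered (κ : Cardinal.{w}) (J : Type w) [LinearOrder J] : Prop :=
  (∀ j : J, ∃ j' : J, j < j') ∧
    ∀ s : Set J, Cardinal.mk s ≤ κ → ∃ j : J, ∀ i ∈ s, i ≤ j

/-- The object `d` is small relative to the class `K`: for some cardinal `κ`,
morphisms from `d` into the colimit of any `κ`-filtered well-ordered continuous
sequence with successor maps in `K` factor, essentially uniquely, through some
stage of the sequence. -/
def IsSmallRel (d : M) (K : MorphismProperty M) : Prop :=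
  ∃ κ : Cardinal.{v}, ∀ (J : WOType.{v}), KFiltered κ J.carrier →
    ∀ (F : J.carrier ⥤ M), IsChainOf K F →
    ∀ (c : Cocone F), IsColimit c →
      (∀ g : d ⟶ c.pt, ∃ (j : J.carrier) (h : d ⟶ F.obj j), h ≫ c.ι.app j = g) ∧
      (∀ (j j' : J.carrier) (h : d ⟶ F.obj j) (h' : d ⟶ F.obj j'),
        h ≫ c.ι.app j = h' ≫ c.ι.app j' →
          ∃ (k : J.carrier) (l : j ≤ k) (l' : j' ≤ k),
            h ≫ F.map (homOfLE l) = h' ≫ F.map (homOfLE l'))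

/-- The model structure `P` is cofibrantly generated, with set of generating
cofibrations `I` and set of generating trivial cofibrations `J`. -/
structure IsCofGen (P : ModelStructure M) (I J : MorphismProperty M) : Prop where
  small_I : ∀ ⦃X Y : M⦄ (f : X ⟶ Y), I f → IsSmallRel X (cell I)
  small_J : ∀ ⦃X Y : M⦄ (f : X ⟶ Y), J f → IsSmallRel X (cell J)
  fib_eq : P.fib = rlp J
  trivFib_eq : inter P.weq P.fib = rlp I

/-- A functor preserves pushouts. -/
def PreservesPushouts (G : M ⥤ N) : Prop :=
  ∀ ⦃Z X Y P : M⦄ (f : Z ⟶ X) (g : Z ⟶ Y) (inl : X ⟶ P) (inr : Y ⟶ P),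
    IsPushout f g inl inr → IsPushout (G.map f) (G.map g) (G.map inl) (G.map inr)

/-- A functor preserves transfinite compositions: it preserves colimits of
diagrams indexed by well-ordered types. -/
def PreservesTransfiniteCompositions (G : M ⥤ N) : Prop :=
  ∀ (J : Type v) [LinearOrder J] [WellFoundedLT J] (F : J ⥤ M) (c : Cocone F),
    IsColimit c → Nonempty (IsColimit (G.mapCocone c))

/-- The image `{G(f) | f ∈ K}` of a class of morphisms under a functor. -/
def strictImage (G : M ⥤ N) (K : MorphismProperty M) : MorphismProperty N :=
  fun _ _ g => ∃ (A B : M) (f : A ⟶ B), K f ∧ Arrow.mk (G.map f) = Arrow.mk g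

end Transfinite

section CofRep

variable {M : Type u} [Category.{v} M]

/-- The cofibrant replacement of `X` given by the functorial factorization of
`∅ ⟶ X`. -/
noncomputable def cofRep (P : ModelStructure M) [HasInitial M] (X : M) : M :=
  P.fact₁.Z.obj (Arrow.mk (initial.to X))

/-- The canonical trivial fibration `QX ⟶ X` from the cofibrant replacement. -/
noncomputable def cofRepHom (P : ModelStructure M) [HasInitial M] (X : M) :
    cofRep P X ⟶ X :=
  P.fact₁.π.app (Arrow.mk (initial.to X))

/-- The functor `X ↦ (∅ ⟶ X)` to the arrow category. -/
noncomputable def toArrowInit (M : Type u) [Category.{v} M] [HasInitial M] : M ⥤ Arrow M where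
  obj X := Arrow.mk (initial.to X)
  map {X Y} f := Arrow.homMk (u := 𝟙 _) (v := f) (by apply initial.hom_ext)

/-- The cofibrant replacement functor of the model structure `P`. -/
noncomputable def qFunctor (P : ModelStructure M) [HasInitial M] : M ⥤ M :=
  toArrowInit M ⋙ P.fact₁.Z

end CofRep

section FunctorCat

variable {S : Type u} [Category.{v} S]

/-- The class of morphisms in `S^C` that belong objectwise on `D` to the class `P`;
for `P` the weak equivalences (resp. fibrations) of a model structure these are
the `D`-weak equivalences (resp. the `D`-fibrations). -/
def objProp {C : Type v} [SmallCategory C] (P : MorphismProperty S) (D : Set C) :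
    MorphismProperty (C ⥤ S) :=
  fun _ _ η => ∀ d ∈ D, P (η.app d)

/-- Trivial `D`-fibrations in `S^C`. -/
def dTrivFib {C : Type v} [SmallCategory C] (P : ModelStructure S) (D : Set C) :
    MorphismProperty (C ⥤ S) :=
  inter (objProp P.weq D) (objProp P.fib D)

/-- `D`-cofibrations in `S^C`: the morphisms having the left lifting property with
respect to all trivial `D`-fibrations. -/
def dCof {C : Type v} [SmallCategory C] (P : ModelStructure S) (D : Set C) :
    MorphismProperty (C ⥤ S) :=
  llp (dTrivFib P D)

variable [HasColimits S]

/-- `D`-cofibrant objects of `S^C`. -/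
def dCofibrant {C : Type v} [SmallCategory C] (P : ModelStructure S) (D : Set C)
    (X : C ⥤ S) : Prop :=
  dCof P D (initial.to X)

/-- The model structure `U_S(C,D)` on `S^C`: a model structure whose weak
equivalences are the `D`-weak equivalences, whose fibrations are the
`D`-fibrations and whose cofibrations are the `D`-cofibrations. -/
structure RelStructure (P : ModelStructure S) (C : Type v) [SmallCategory C] (D : Set C) where
  N : ModelStructure (C ⥤ S)
  weq_eq : N.weq = objProp P.weq D
  fib_eq : N.fib = objProp P.fib D
  cof_eq : N.cof = dCof P D

/-- `X` satisfies `D`-codescent at `c`: the cofibrant replacement morphism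
`Q_{C,D} X ⟶ X` in `U_S(C,D)` is a weak equivalence at `c`. -/
def CodescentAt {C : Type v} [SmallCategory C] (P : ModelStructure S) {D : Set C}
    (U : RelStructure P C D) (X : C ⥤ S) (c : C) : Prop :=
  P.weq ((cofRepHom U.N X).app c)

/-- `X` satisfies `D`-codescent: the cofibrant replacement morphism
`Q_{C,D} X ⟶ X` is a `C`-weak equivalence. -/
def Codescent {C : Type v} [SmallCategory C] (P : ModelStructure S) {D : Set C}
    (U : RelStructure P C D) (X : C ⥤ S) : Prop :=
  ∀ c : C, CodescentAt P U X c

/-- The coproduct property for weak equivalences. -/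
def CoproductProperty (P : ModelStructure S) : Prop :=
  ∀ (ι : Type v) (X Y : ι → S) (f : ∀ i, X i ⟶ Y i),
    (∀ i, P.weq (f i)) ↔ P.weq (Limits.Sigma.map f)

end FunctorCat

section Pairs

variable {A : Type v} [SmallCategory A] {C : Type v} [SmallCategory C]

/-- Two subsets of objects are retract equivalent. -/
def RetractEquiv (D D' : Set C) : Prop :=
  (∀ d ∈ D, ∃ d' ∈ D', IsRetractObj d d') ∧ (∀ d' ∈ D', ∃ d ∈ D, IsRetractObj d' d)

/-- `Φ : (A,B) ⟶ (C,D)` is left glossy. -/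
def LeftGlossy (Φ : A ⥤ C) (B : Set A) : Prop :=
  ∀ b ∈ B, ∃ (ι : Type v) (tgt : ι → A) (β : ∀ i, Φ.obj b ⟶ Φ.obj (tgt i)),
    (∀ i, tgt i ∈ B) ∧
      ∀ (a : A) (α : Φ.obj b ⟶ Φ.obj a),
        ∃! p : (i : ι) × (tgt i ⟶ a), β p.1 ≫ Φ.map p.2 = α

/-- `Φ : (A,B) ⟶ (C,D)` is right glossy. -/
def RightGlossy (Φ : A ⥤ C) (B : Set A) : Prop :=
  ∀ b ∈ B, ∃ (ι : Type v) (src : ι → A) (β : ∀ j, Φ.obj (src j) ⟶ Φ.obj b),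
    (∀ j, src j ∈ B) ∧
      ∀ (a : A) (α : Φ.obj a ⟶ Φ.obj b),
        ∃! p : (j : ι) × (a ⟶ src j), Φ.map p.2 ≫ β p.1 = α

/-- A subset of objects is left absorbant: the source of any morphism whose
target lies in the subset also lies in the subset. -/
def LeftAbsorbant (D : Set C) : Prop :=
  ∀ ⦃c c' : C⦄, (c ⟶ c') → c' ∈ D → c ∈ D

end Pairs

end Codescent
open Codescent

section Aux

open Codescent

variable {M : Type u₃} [Category.{w} M]

lemma aux_retract_of_arrowIso {X Y X' Y' : M} {f : X ⟶ Y} {g : X' ⟶ Y'}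
    (e : Arrow.mk f ≅ Arrow.mk g) : RetractHom f g :=
  ⟨e.hom, e.inv, e.hom_inv_id⟩

lemma aux_weq_fib_id (P : ModelStructure M) (Y : M) : P.weq (𝟙 Y) ∧ P.fib (𝟙 Y) := by
  have fac : P.fact₂.ι.app (Arrow.mk (𝟙 Y)) ≫ P.fact₂.π.app (Arrow.mk (𝟙 Y)) = 𝟙 Y :=
    P.fact₂.fac (Arrow.mk (𝟙 Y))
  constructor
  · refine P.weq_retract _ (P.fact₂.ι.app (Arrow.mk (𝟙 Y))) ?_
      (P.fact₂.mem_left (Arrow.mk (𝟙 Y))).1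
    exact ⟨Arrow.homMk (u := 𝟙 Y) (v := P.fact₂.ι.app (Arrow.mk (𝟙 Y))) (by rfl),
      Arrow.homMk (u := 𝟙 Y) (v := P.fact₂.π.app (Arrow.mk (𝟙 Y)))
        (by exact (Category.comp_id (𝟙 Y)).trans fac.symm),
      by ext; exacts [Category.comp_id (𝟙 Y), fac]⟩
  · refine P.fib_retract _ (P.fact₂.π.app (Arrow.mk (𝟙 Y))) ?_
      (P.fact₂.mem_right (Arrow.mk (𝟙 Y)))
    exact ⟨Arrow.homMk (u := P.fact₂.ι.app (Arrow.mk (𝟙 Y))) (v := 𝟙 Y)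
      (by exact fac.trans (Category.comp_id (𝟙 Y)).symm),
      Arrow.homMk (u := P.fact₂.π.app (Arrow.mk (𝟙 Y))) (v := 𝟙 Y) (by rfl),
      by ext; exacts [fac, Category.comp_id (𝟙 Y)]⟩

lemma aux_weq_fib_iso (P : ModelStructure M) {X Y : M} (f : X ⟶ Y) [IsIso f] :
    P.weq f ∧ P.fib f := by
  have h : RetractHom f (𝟙 Y) :=
    ⟨Arrow.homMk (u := f) (v := 𝟙 Y) (by simp),
      Arrow.homMk (u := inv f) (v := 𝟙 Y) (by simp),
      by ext <;> simp⟩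
  exact ⟨P.weq_retract _ _ h (aux_weq_fib_id P Y).1,
    P.fib_retract _ _ h (aux_weq_fib_id P Y).2⟩

noncomputable def aux_isTerminal_limit_of_isEmpty {J : Type u₂} [Category.{w} J] [IsEmpty J]
    (G : J ⥤ M) [HasLimit G] : IsTerminal (limit G) :=
  IsTerminal.ofUniqueHom
    (fun Z => limit.lift G ⟨Z, ⟨fun j => isEmptyElim j, fun j => isEmptyElim j⟩⟩)
    (fun Z m => limit.hom_ext (fun j => isEmptyElim j))

lemma aux_weq_fib_of_terminal (P : ModelStructure M) {X Y : M} (f : X ⟶ Y)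
    (hX : IsTerminal X) (hY : IsTerminal Y) : P.weq f ∧ P.fib f := by
  have : IsIso f := ⟨hX.from Y, hX.hom_ext _ _, hY.hom_ext _ _⟩
  exact aux_weq_fib_iso P f

end Aux

section Key

variable {S : Type u} [Category.{v} S] [HasLimits S]
  {C : Type v} [SmallCategory C] (P : ModelStructure S) (Aset B D : Set C)

/-- Extension along the inclusion of a left absorbant full subcategory sends
trivial `B`-fibrations to trivial `D`-fibrations. -/
lemma aux_ext_trivFib
    (habs : ∀ ⦃c a : C⦄, (c ⟶ a) → a ∈ Aset → c ∈ Aset)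
    (hDA : D ∩ Aset = B)
    {X Y : (ObjectProperty.FullSubcategory fun c => c ∈ Aset) ⥤ S} (g : X ⟶ Y)
    (hg : dTrivFib P {x : ObjectProperty.FullSubcategory fun c => c ∈ Aset | x.obj ∈ B} g) :
    dTrivFib P D ((ObjectProperty.ι fun c => c ∈ Aset).ran.map g) := by
  set F := ObjectProperty.ι fun c => c ∈ Aset with hF
  suffices h : ∀ d ∈ D, P.weq ((F.ran.map g).app d) ∧ P.fib ((F.ran.map g).app d) by
    exact ⟨fun d hd => (h d hd).1, fun d hd => (h d hd).2⟩
  intro d hd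
  by_cases hdA : d ∈ Aset
  · -- `d` lies in `A`, hence in `B`; use the counit isomorphism.
    set a : ObjectProperty.FullSubcategory fun c => c ∈ Aset := ⟨d, hdA⟩ with ha
    have hB : a ∈ {x : ObjectProperty.FullSubcategory fun c => c ∈ Aset | x.obj ∈ B} := by
      show d ∈ B; rw [← hDA]; exact ⟨hd, hdA⟩
    have nat := congr_app (F.ranCounit.naturality g) a
    dsimp at nat
    have e : Arrow.mk ((F.ran.map g).app d) ≅ Arrow.mk (g.app a) :=
      Arrow.isoMk (asIso ((F.ranCounit.app X).app a)) (asIso ((F.ranCounit.app Y).app a))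
        (by exact nat.symm)
    exact ⟨P.weq_retract _ _ (aux_retract_of_arrowIso e) (hg.1 a hB),
      P.fib_retract _ _ (aux_retract_of_arrowIso e) (hg.2 a hB)⟩
  · -- `d` is outside `A`; both values are terminal.
    have hempty : IsEmpty (StructuredArrow d F) :=
      ⟨fun f => hdA (habs f.hom f.right.property)⟩
    have tX : IsTerminal ((F.ran.obj X).obj d) :=
      IsTerminal.ofIso (aux_isTerminal_limit_of_isEmpty _) (F.ranObjObjIsoLimit X d).symm
    have tY : IsTerminal ((F.ran.obj Y).obj d) :=
      IsTerminal.ofIso (aux_isTerminal_limit_of_isEmpty _) (F.ranObjObjIsoLimit Y d).symm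
    exact aux_weq_fib_of_terminal P _ tX tY

end Key


/-- for a left absorbant full subcategory `A ⊆ C` with
`D ∩ A = B`, the restriction and extension functors form a Quillen adjunction
`U_S(C,D) ⇄ U_S(A,B)` (Balmer–Matthey, Prop. 7.14). -/
theorem statement_12 {S : Type u} [Category.{v} S] [HasLimits S] [HasColimits S]
    (P : ModelStructure S) (I J : MorphismProperty S) (hcg : IsCofGen P I J)
    {C : Type v} [SmallCategory C] (Aset B D : Set C)
    (hBA : B ⊆ Aset) (hBD : B ⊆ D)
    (habs : ∀ ⦃c a : C⦄, (c ⟶ a) → a ∈ Aset → c ∈ Aset)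
    (hDA : D ∩ Aset = B) :
    Nonempty ((Functor.whiskeringLeft (ObjectProperty.FullSubcategory fun c => c ∈ Aset) C S).obj
        (ObjectProperty.ι (fun c => c ∈ Aset)) ⊣
      (ObjectProperty.ι (fun c => c ∈ Aset)).ran) ∧
    (∀ ⦃X Y : C ⥤ S⦄ (η : X ⟶ Y), dCof P D η →
      dCof P {x : ObjectProperty.FullSubcategory fun c => c ∈ Aset | x.obj ∈ B}
        (((Functor.whiskeringLeft (ObjectProperty.FullSubcategory fun c => c ∈ Aset) C S).obj
          (ObjectProperty.ι (fun c => c ∈ Aset))).map η)) ∧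
    (∀ ⦃X Y : C ⥤ S⦄ (η : X ⟶ Y), objProp P.weq D η → dCof P D η →
      objProp P.weq {x : ObjectProperty.FullSubcategory fun c => c ∈ Aset | x.obj ∈ B}
          (((Functor.whiskeringLeft (ObjectProperty.FullSubcategory fun c => c ∈ Aset) C S).obj
            (ObjectProperty.ι (fun c => c ∈ Aset))).map η) ∧
        dCof P {x : ObjectProperty.FullSubcategory fun c => c ∈ Aset | x.obj ∈ B}
          (((Functor.whiskeringLeft (ObjectProperty.FullSubcategory fun c => c ∈ Aset) C S).obj
            (ObjectProperty.ι (fun c => c ∈ Aset))).map η)) ∧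
    (∀ X : C ⥤ S, dCofibrant P D X →
      dCofibrant P {x : ObjectProperty.FullSubcategory fun c => c ∈ Aset | x.obj ∈ B}
        (((Functor.whiskeringLeft (ObjectProperty.FullSubcategory fun c => c ∈ Aset) C S).obj
          (ObjectProperty.ι (fun c => c ∈ Aset))).obj X)) ∧
    (∀ ⦃X Y : C ⥤ S⦄ (η : X ⟶ Y), objProp P.fib D η →
      objProp P.fib {x : ObjectProperty.FullSubcategory fun c => c ∈ Aset | x.obj ∈ B}
        (((Functor.whiskeringLeft (ObjectProperty.FullSubcategory fun c => c ∈ Aset) C S).obj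
          (ObjectProperty.ι (fun c => c ∈ Aset))).map η)) ∧
    (∀ ⦃X Y : C ⥤ S⦄ (η : X ⟶ Y), objProp P.weq D η →
      objProp P.weq {x : ObjectProperty.FullSubcategory fun c => c ∈ Aset | x.obj ∈ B}
        (((Functor.whiskeringLeft (ObjectProperty.FullSubcategory fun c => c ∈ Aset) C S).obj
          (ObjectProperty.ι (fun c => c ∈ Aset))).map η)) := by
  classical
  set F := ObjectProperty.ι (fun c => c ∈ Aset) with hF
  set res := (Functor.whiskeringLeft (ObjectProperty.FullSubcategory fun c => c ∈ Aset) C S).obj F with hres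
  have adj : res ⊣ F.ran := F.ranAdjunction S
  -- restriction preserves `D`-cofibrations
  have hcof : ∀ ⦃X Y : C ⥤ S⦄ (η : X ⟶ Y), dCof P D η →
      dCof P {x : ObjectProperty.FullSubcategory fun c => c ∈ Aset | x.obj ∈ B} (res.map η) := by
    intro X Y η hη W V g hg
    rw [adj.hasLiftingProperty_iff]
    exact hη _ (aux_ext_trivFib P Aset B D habs hDA g hg)
  -- restriction preserves `D`-fibrations
  have hfib : ∀ ⦃X Y : C ⥤ S⦄ (η : X ⟶ Y), objProp P.fib D η →
      objProp P.fib {x : ObjectProperty.FullSubcategory fun c => c ∈ Aset | x.obj ∈ B} (res.map η) :=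
    fun X Y η h x hx => h x.obj (hBD hx)
  -- restriction preserves `D`-weak equivalences
  have hweq : ∀ ⦃X Y : C ⥤ S⦄ (η : X ⟶ Y), objProp P.weq D η →
      objProp P.weq {x : ObjectProperty.FullSubcategory fun c => c ∈ Aset | x.obj ∈ B} (res.map η) :=
    fun X Y η h x hx => h x.obj (hBD hx)
  refine ⟨⟨adj⟩, hcof, fun X Y η hw hc => ⟨hweq η hw, hcof η hc⟩, ?_, hfib, hweq⟩
  -- restriction preserves cofibrant objects
  intro X hX
  haveI : PreservesColimitsOfSize.{v, v} res := adj.leftAdjoint_preservesColimits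
  have hii : IsInitial (res.obj (⊥_ (C ⥤ S))) := initialIsInitial.isInitialObj res _
  have e : (⊥_ ((ObjectProperty.FullSubcategory fun c => c ∈ Aset) ⥤ S)) ≅ res.obj (⊥_ (C ⥤ S)) :=
    initialIsInitial.uniqueUpToIso hii
  have heq : initial.to (res.obj X) = e.hom ≫ res.map (initial.to X) :=
    initial.hom_ext _ _
  intro W V g hg
  haveI h1 : HasLiftingProperty (res.map (initial.to X)) g := hcof _ hX g hg
  rw [show initial.to (res.obj X) = e.hom ≫ res.map (initial.to X) from heq]
  infer_instance
end

section
/- Let S be a cofibrantly generated model category and Φ : (A, B) → (C, D) a morphism of pairs of small categories such that (a) D = Φ(B) as sets of objects, and (b) Φ is left glossy. Let X ∈ S^C and a an object of A. Then X satisfies D-codescent at Φ(a) if and only if Φ^*X satisfies B-codescent at a. In particular, X satisfies D-codescent at every object of Φ(A) if and only if Φ^*X satisfies B-codescent. -/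
/-! Preliminaries: basic notions of homotopical algebra (lifting properties,
model structures, transfinite compositions, relative cell complexes, smallness,
cofibrant generation) and the relative model structure `U_S(C,D)` on functor
categories, following Balmer–Matthey, "Codescent theory I". -/

universe w v u u₂ u₃

open CategoryTheory Limits

open Codescent


section AuxiliaryLemmas

open CategoryTheory Limits Codescent

/-- Identities are weak equivalences, in any model structure. -/
lemma aux_weq_id {M : Type u₂} [Category.{u₃} M] (P : ModelStructure M) (Y : M) :
    P.weq (𝟙 Y) := by
  have h : P.fact₁.ι.app (Arrow.mk (𝟙 Y)) ≫ P.fact₁.π.app (Arrow.mk (𝟙 Y)) = 𝟙 Y :=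
    P.fact₁.fac (Arrow.mk (𝟙 Y))
  refine P.weq_retract (𝟙 Y) (P.fact₁.π.app (Arrow.mk (𝟙 Y))) ?_ (P.fact₁.mem_right _).1
  refine ⟨Arrow.homMk (u := P.fact₁.ι.app (Arrow.mk (𝟙 Y))) (v := 𝟙 Y) (h.trans (Category.comp_id _).symm),
    Arrow.homMk (u := P.fact₁.π.app (Arrow.mk (𝟙 Y))) (v := 𝟙 Y) (by rfl), ?_⟩
  ext
  · exact h
  · exact Category.comp_id _

/-- A morphism with the left lifting property against all fibrations is a weak
equivalence (retract argument). -/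
lemma aux_weq_of_llp_fib {M : Type u₂} [Category.{u₃} M] (P : ModelStructure M)
    {X Y : M} (f : X ⟶ Y)
    (hf : ∀ ⦃E F : M⦄ (g : E ⟶ F), P.fib g → HasLiftingProperty f g) :
    P.weq f := by
  have hfac : P.fact₂.ι.app (Arrow.mk f) ≫ P.fact₂.π.app (Arrow.mk f) = f :=
    P.fact₂.fac (Arrow.mk f)
  have hu := P.fact₂.mem_left (Arrow.mk f)
  have hv := P.fact₂.mem_right (Arrow.mk f)
  haveI := hf (P.fact₂.π.app (Arrow.mk f)) hv
  have sq : CommSq (P.fact₂.ι.app (Arrow.mk f)) f (P.fact₂.π.app (Arrow.mk f)) (𝟙 Y) :=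
    ⟨hfac.trans (Category.comp_id _).symm⟩
  haveI : sq.HasLift := (hf _ hv).sq_hasLift sq
  refine P.weq_retract f (P.fact₂.ι.app (Arrow.mk f)) ?_ hu.1
  refine ⟨Arrow.homMk (u := 𝟙 X) (v := sq.lift) ((Category.id_comp _).trans sq.fac_left.symm),
    Arrow.homMk (u := 𝟙 X) (v := P.fact₂.π.app (Arrow.mk f)) ((Category.id_comp f).trans hfac.symm), ?_⟩
  ext
  · exact Category.id_comp _
  · exact sq.fac_right

section FunctorCatAux

variable {S : Type u} [Category.{v} S]

/-- Products of morphisms commute with projections. -/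
lemma aux_pi_map_π [HasLimits S] {ι' : Type v} {E F : ι' → S}
    (g : ∀ i, E i ⟶ F i) (i : ι') :
    Limits.Pi.map g ≫ Pi.π F i = Pi.π E i ≫ g i :=
  limMap_π _ _

/-- `rlp` classes are stable under products of morphisms. -/
lemma aux_rlp_pi [HasLimits S] (K : MorphismProperty S) {ι' : Type v} {E F : ι' → S}
    (g : ∀ i, E i ⟶ F i) (hg : ∀ i, rlp K (g i)) : rlp K (Limits.Pi.map g) := by
  intro X Y f hf
  haveI : ∀ i, HasLiftingProperty f (g i) := fun i => hg i f hf
  constructor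
  intro t b sq
  have sqi : ∀ i, CommSq (t ≫ Pi.π E i) f (g i) (b ≫ Pi.π F i) := fun i =>
    ⟨by rw [Category.assoc, ← aux_pi_map_π, ← Category.assoc, sq.w, Category.assoc]⟩
  exact ⟨⟨⟨Pi.lift (fun i => (sqi i).lift),
    Pi.hom_ext _ _ (fun i => by
      rw [Category.assoc, Pi.lift_π]
      simpa using (sqi i).fac_left),
    Pi.hom_ext _ _ (fun i => by
      rw [Category.assoc, aux_pi_map_π, ← Category.assoc, Pi.lift_π]
      simpa using (sqi i).fac_right)⟩⟩⟩

/-- The "power" functor at `a`, on objects. -/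
@[reducible]
noncomputable def powerObj [HasLimits S] {A : Type v} [SmallCategory A] (a : A) (E : S) :
    A ⥤ S where
  obj a' := ∏ᶜ (fun (_ : a' ⟶ a) => E)
  map {a' a''} δ := Pi.lift (fun h => Pi.π (fun (_ : a' ⟶ a) => E) (δ ≫ h))
  map_id a' := Pi.hom_ext _ _ (fun h => by simp)
  map_comp {a₁ a₂ a₃} δ δ' := Pi.hom_ext _ _ (fun h => by simp)

/-- The "power" functor at `a`, on morphisms. -/
@[reducible]
noncomputable def powerMap [HasLimits S] {A : Type v} [SmallCategory A] (a : A)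
    {E F : S} (g : E ⟶ F) : powerObj (S := S) a E ⟶ powerObj a F where
  app a' := Limits.Pi.map (fun _ => g)
  naturality a' a'' δ := Pi.hom_ext _ _ (fun h => by simp [powerObj])

lemma powerObj_map_π [HasLimits S] {A : Type v} [SmallCategory A] (a : A) (E : S)
    {a' a'' : A} (δ : a' ⟶ a'') (h : a'' ⟶ a) :
    (powerObj (S := S) a E).map δ ≫ Pi.π (fun (_ : a'' ⟶ a) => E) h =
      Pi.π (fun (_ : a' ⟶ a) => E) (δ ≫ h) := by
  simp [powerObj]

lemma powerMap_app_π [HasLimits S] {A : Type v} [SmallCategory A] (a : A)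
    {E F : S} (g : E ⟶ F) (a' : A) (h : a' ⟶ a) :
    (powerMap (S := S) a g).app a' ≫ Pi.π (fun (_ : a' ⟶ a) => F) h =
      Pi.π (fun (_ : a' ⟶ a) => E) h ≫ g := by
  simp [powerMap]

/-- Trivial cofibrations in a relative model structure are objectwise weak
equivalences (at every object, not only those of `B`). -/
lemma aux_trivCof_app_weq [HasLimits S] [HasColimits S] (P : ModelStructure S)
    {I J : MorphismProperty S} (hcg : IsCofGen P I J)
    {A : Type v} [SmallCategory A] {B : Set A} (UA : RelStructure P A B)
    {G H : A ⥤ S} (f : G ⟶ H) (hw : UA.N.weq f) (hc : UA.N.cof f) (a : A) :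
    P.weq (f.app a) := by
  refine aux_weq_of_llp_fib P (f.app a) ?_
  intro E F g hg
  have hfib : UA.N.fib (powerMap (S := S) a g) := by
    rw [UA.fib_eq]
    intro b _
    have h1 : rlp J (Limits.Pi.map (fun (_ : b ⟶ a) => g)) := by
      refine aux_rlp_pi J _ (fun _ => ?_)
      rw [← hcg.fib_eq]; exact hg
    show P.fib (Limits.Pi.map (fun (_ : b ⟶ a) => g))
    rw [hcg.fib_eq]; exact h1
  haveI := UA.N.fib_lift f (powerMap (S := S) a g) hw hc hfib
  constructor
  intro s t sq
  let sh : G ⟶ powerObj (S := S) a E :=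
    { app := fun a' => Pi.lift (fun h => G.map h ≫ s)
      naturality := fun a' a'' δ => Pi.hom_ext _ _ (fun h => by
        rw [Category.assoc, Pi.lift_π, Category.assoc, powerObj_map_π, Pi.lift_π,
          ← Category.assoc, ← G.map_comp]) }
  let th : H ⟶ powerObj (S := S) a F :=
    { app := fun a' => Pi.lift (fun h => H.map h ≫ t)
      naturality := fun a' a'' δ => Pi.hom_ext _ _ (fun h => by
        rw [Category.assoc, Pi.lift_π, Category.assoc, powerObj_map_π, Pi.lift_π,
          ← Category.assoc, ← H.map_comp]) }
  have sq2 : CommSq sh f (powerMap (S := S) a g) th := ⟨by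
    refine NatTrans.ext (funext fun a' => ?_)
    refine Pi.hom_ext (f := fun (_ : a' ⟶ a) => F) _ _ (fun h => ?_)
    have hn : f.app a' ≫ H.map h = G.map h ≫ f.app a := (f.naturality h).symm
    show (sh.app a' ≫ (powerMap (S := S) a g).app a') ≫ _ = (f.app a' ≫ th.app a') ≫ _
    rw [Category.assoc, Category.assoc, powerMap_app_π]
    show sh.app a' ≫ Pi.π (fun (_ : a' ⟶ a) => E) h ≫ g =
      f.app a' ≫ Pi.lift (fun h => H.map h ≫ t) ≫ Pi.π (fun (_ : a' ⟶ a) => F) h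
    rw [Pi.lift_π, ← Category.assoc, ← Category.assoc, hn]
    show (Pi.lift (fun h => G.map h ≫ s) ≫ Pi.π (fun (_ : a' ⟶ a) => E) h) ≫ g = _
    rw [Pi.lift_π, Category.assoc, Category.assoc, sq.w]⟩
  refine ⟨⟨⟨sq2.lift.app a ≫ Pi.π (fun (_ : a ⟶ a) => E) (𝟙 a), ?_, ?_⟩⟩⟩
  · have h1 : (f ≫ sq2.lift).app a = sh.app a := by rw [sq2.fac_left]
    have h1' : f.app a ≫ sq2.lift.app a = sh.app a := h1
    rw [← Category.assoc, h1']
    show Pi.lift (fun h => G.map h ≫ s) ≫ Pi.π (fun (_ : a ⟶ a) => E) (𝟙 a) = s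
    rw [Pi.lift_π, G.map_id, Category.id_comp]
  · have h2 : (sq2.lift ≫ powerMap (S := S) a g).app a = th.app a := by rw [sq2.fac_right]
    have h2' : sq2.lift.app a ≫ (powerMap (S := S) a g).app a = th.app a := h2
    rw [Category.assoc, ← powerMap_app_π (S := S) a g a (𝟙 a), ← Category.assoc, h2']
    show Pi.lift (fun h => H.map h ≫ t) ≫ Pi.π (fun (_ : a ⟶ a) => F) (𝟙 a) = t
    rw [Pi.lift_π, H.map_id, Category.id_comp]

/-- `dCof` is closed under composition. -/
lemma aux_dCof_comp {A : Type v} [SmallCategory A] {P : ModelStructure S} {B : Set A}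
    {X Y Z : A ⥤ S} {f : X ⟶ Y} {g : Y ⟶ Z} (hf : dCof P B f) (hg : dCof P B g) :
    dCof P B (f ≫ g) := fun E F η hη => by
  haveI := hf η hη
  haveI := hg η hη
  infer_instance

/-- Conversion from `dCof` to the cofibrations of a relative structure. -/
lemma aux_cof_of_dCof {A : Type v} [SmallCategory A] {P : ModelStructure S} {B : Set A}
    (UA : RelStructure P A B) {X Y : A ⥤ S} {f : X ⟶ Y} (h : dCof P B f) :
    UA.N.cof f := by
  have := UA.cof_eq
  exact this.symm ▸ h

/-- Conversion from the cofibrations of a relative structure to `dCof`. -/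
lemma aux_dCof_of_cof {A : Type v} [SmallCategory A] {P : ModelStructure S} {B : Set A}
    (UA : RelStructure P A B) {X Y : A ⥤ S} {f : X ⟶ Y} (h : UA.N.cof f) :
    dCof P B f := by
  have := UA.cof_eq
  exact this ▸ h

/-- Lifting property of the first coproduct inclusion. -/
lemma aux_llp_inl [HasColimits S] {A : Type v} [SmallCategory A] {R R' E F : A ⥤ S}
    (η : E ⟶ F) (hR' : HasLiftingProperty (initial.to R') η) :
    HasLiftingProperty (coprod.inl : R ⟶ R ⨿ R') η := by
  constructor
  intro t b sq
  have sq' : CommSq (initial.to E) (initial.to R') η (coprod.inr ≫ b) :=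
    ⟨initial.hom_ext _ _⟩
  exact ⟨⟨⟨coprod.desc t sq'.lift, coprod.inl_desc _ _, by
    apply coprod.hom_ext
    · rw [← Category.assoc, coprod.inl_desc, sq.w]
    · rw [← Category.assoc, coprod.inr_desc, sq'.fac_right]⟩⟩⟩

/-- Lifting property of the second coproduct inclusion. -/
lemma aux_llp_inr [HasColimits S] {A : Type v} [SmallCategory A] {R R' E F : A ⥤ S}
    (η : E ⟶ F) (hR : HasLiftingProperty (initial.to R) η) :
    HasLiftingProperty (coprod.inr : R' ⟶ R ⨿ R') η := by
  constructor
  intro t b sq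
  have sq' : CommSq (initial.to E) (initial.to R) η (coprod.inl ≫ b) :=
    ⟨initial.hom_ext _ _⟩
  exact ⟨⟨⟨coprod.desc sq'.lift t, coprod.inr_desc _ _, by
    apply coprod.hom_ext
    · rw [← Category.assoc, coprod.inl_desc, sq'.fac_right]
    · rw [← Category.assoc, coprod.inr_desc, sq.w]⟩⟩⟩

/-- Trivial fibrations between cofibrant objects in a relative model structure are
objectwise weak equivalences (cylinder argument). -/
lemma aux_trivFib_app_weq [HasLimits S] [HasColimits S] (P : ModelStructure S)
    {I J : MorphismProperty S} (hcg : IsCofGen P I J)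
    {A : Type v} [SmallCategory A] {B : Set A} (UA : RelStructure P A B)
    {R Y : A ⥤ S} (v : R ⟶ Y) (hwv : UA.N.weq v) (hfv : UA.N.fib v)
    (hR : UA.N.cof (initial.to R)) (hY : UA.N.cof (initial.to Y)) (a : A) :
    P.weq (v.app a) := by
  haveI := UA.N.cof_lift (initial.to Y) v hY hwv hfv
  have sqt : CommSq (initial.to R) (initial.to Y) v (𝟙 Y) := ⟨initial.hom_ext _ _⟩
  have htv : sqt.lift ≫ v = 𝟙 Y := sqt.fac_right
  obtain ⟨Z, c, σ, hcσ, hccof, hσ⟩ :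
      ∃ (Z : A ⥤ S) (c : R ⨿ R ⟶ Z) (σ : Z ⟶ R),
        c ≫ σ = coprod.desc (𝟙 R) (𝟙 R) ∧ UA.N.cof c ∧ inter UA.N.weq UA.N.fib σ :=
    ⟨_, _, _, UA.N.fact₁.fac (Arrow.mk (coprod.desc (𝟙 R) (𝟙 R))),
      UA.N.fact₁.mem_left _, UA.N.fact₁.mem_right _⟩
  have hi0cof : UA.N.cof (coprod.inl ≫ c) := by
    rw [UA.cof_eq] at hR hccof ⊢
    intro E F η hη
    haveI := aux_llp_inl (R := R) (R' := R) η (hR η hη)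
    haveI := hccof η hη
    infer_instance
  have hi1cof : UA.N.cof (coprod.inr ≫ c) := by
    rw [UA.cof_eq] at hR hccof ⊢
    intro E F η hη
    haveI := aux_llp_inr (R := R) (R' := R) η (hR η hη)
    haveI := hccof η hη
    infer_instance
  have hi0s : (coprod.inl ≫ c) ≫ σ = 𝟙 R := by
    rw [Category.assoc, hcσ, coprod.inl_desc]
  have hi1s : (coprod.inr ≫ c) ≫ σ = 𝟙 R := by
    rw [Category.assoc, hcσ, coprod.inr_desc]
  have hi0w : UA.N.weq (coprod.inl ≫ c) :=
    UA.N.weq_cancel_right _ σ hσ.1 (by rw [hi0s]; exact aux_weq_id UA.N R)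
  have hi1w : UA.N.weq (coprod.inr ≫ c) :=
    UA.N.weq_cancel_right _ σ hσ.1 (by rw [hi1s]; exact aux_weq_id UA.N R)
  haveI := UA.N.cof_lift c v hccof hwv hfv
  have sqH : CommSq (coprod.desc (𝟙 R) (v ≫ sqt.lift)) c v (σ ≫ v) := ⟨by
    have h1 : c ≫ σ ≫ v = coprod.desc (𝟙 R) (𝟙 R) ≫ v := by
      rw [← Category.assoc, hcσ]
    rw [h1]
    apply coprod.hom_ext
    · rw [← Category.assoc, ← Category.assoc, coprod.inl_desc, coprod.inl_desc]
    · rw [← Category.assoc, ← Category.assoc, coprod.inr_desc, coprod.inr_desc,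
        Category.id_comp, Category.assoc, htv, Category.comp_id]⟩
  have hcH : c ≫ sqH.lift = coprod.desc (𝟙 R) (v ≫ sqt.lift) := sqH.fac_left
  have h0 : (coprod.inl ≫ c) ≫ sqH.lift = 𝟙 R := by
    rw [Category.assoc, hcH, coprod.inl_desc]
  have h1 : (coprod.inr ≫ c) ≫ sqH.lift = v ≫ sqt.lift := by
    rw [Category.assoc, hcH, coprod.inr_desc]
  have wi0 := aux_trivCof_app_weq P hcg UA _ hi0w hi0cof a
  have wi1 := aux_trivCof_app_weq P hcg UA _ hi1w hi1cof a
  have wH : P.weq (sqH.lift.app a) := by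
    refine P.weq_cancel_left ((coprod.inl ≫ c).app a) (sqH.lift.app a) wi0 ?_
    rw [← NatTrans.comp_app, h0]
    exact aux_weq_id P _
  have wvt : P.weq (v.app a ≫ sqt.lift.app a) := by
    have h2 : v.app a ≫ sqt.lift.app a = (coprod.inr ≫ c).app a ≫ sqH.lift.app a := by
      rw [← NatTrans.comp_app, ← NatTrans.comp_app, h1]
    rw [h2]
    exact P.weq_comp _ _ wi1 wH
  have htva : sqt.lift.app a ≫ v.app a = 𝟙 (Y.obj a) := by
    rw [← NatTrans.comp_app, htv]; rfl
  refine P.weq_retract (v.app a) (v.app a ≫ sqt.lift.app a) ?_ wvt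
  refine ⟨Arrow.homMk (u := 𝟙 (R.obj a)) (v := sqt.lift.app a) (by simp),
    Arrow.homMk (u := 𝟙 (R.obj a)) (v := v.app a) (by simp [htva]), ?_⟩
  ext
  · simp
  · simpa using htva

end FunctorCatAux

section GlossyAux

variable {S : Type u} [Category.{v} S]
variable {A : Type v} [SmallCategory A] {C : Type v} [SmallCategory C] (Φ : A ⥤ C)
variable {b : A} {ι : Type v} {tgt : ι → A} (β : ∀ i, Φ.obj b ⟶ Φ.obj (tgt i))
variable (hfac : ∀ (a : A) (α : Φ.obj b ⟶ Φ.obj a),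
    ∃! p : (i : ι) × (tgt i ⟶ a), β p.1 ≫ Φ.map p.2 = α)

/-- The chosen glossy factorization. -/
noncomputable def gfac (a : A) (α : Φ.obj b ⟶ Φ.obj a) : (i : ι) × (tgt i ⟶ a) :=
  (hfac a α).exists.choose

lemma gfac_spec (a : A) (α : Φ.obj b ⟶ Φ.obj a) :
    β (gfac Φ β hfac a α).1 ≫ Φ.map (gfac Φ β hfac a α).2 = α :=
  (hfac a α).exists.choose_spec

lemma gfac_eq (a : A) (α : Φ.obj b ⟶ Φ.obj a) (i : ι) (γ : tgt i ⟶ a)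
    (h : β i ≫ Φ.map γ = α) : gfac Φ β hfac a α = ⟨i, γ⟩ :=
  (hfac a α).unique (gfac_spec Φ β hfac a α) h

variable [HasLimits S]

/-- The glossy cone computing the pointwise right Kan extension at `Φ.obj b`. -/
@[reducible]
noncomputable def glossyCone (G : A ⥤ S) :
    Cone (StructuredArrow.proj (Φ.obj b) Φ ⋙ G) where
  pt := ∏ᶜ (fun i => G.obj (tgt i))
  π :=
    { app := fun j => Pi.π (fun i => G.obj (tgt i)) (gfac Φ β hfac j.right j.hom).1 ≫
        G.map (gfac Φ β hfac j.right j.hom).2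
      naturality := fun j j' m => by
        dsimp
        rw [Category.id_comp]
        have h : β (gfac Φ β hfac j.right j.hom).1 ≫
            Φ.map ((gfac Φ β hfac j.right j.hom).2 ≫ m.right) = j'.hom := by
          rw [Φ.map_comp, ← Category.assoc, gfac_spec]
          exact StructuredArrow.w m
        rw [gfac_eq Φ β hfac j'.right j'.hom _ _ h]
        dsimp
        exact (congrArg (CategoryStruct.comp _) (G.map_comp _ _)).trans
          (Category.assoc _ _ _).symm }

lemma glossyCone_π_app (G : A ⥤ S) (j : StructuredArrow (Φ.obj b) Φ) :
    (glossyCone Φ β hfac G).π.app j =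
      Pi.π (fun i => G.obj (tgt i)) (gfac Φ β hfac j.right j.hom).1 ≫
        G.map (gfac Φ β hfac j.right j.hom).2 := rfl

lemma glossyCone_π_mk (G : A ⥤ S) (i : ι) :
    (glossyCone Φ β hfac G).π.app (StructuredArrow.mk (β i)) =
      Pi.π (fun i => G.obj (tgt i)) i := by
  rw [glossyCone_π_app]
  have h : gfac Φ β hfac (tgt i) (β i) = ⟨i, 𝟙 (tgt i)⟩ :=
    gfac_eq Φ β hfac (tgt i) (β i) i (𝟙 (tgt i)) (by simp)
  have h' : gfac Φ β hfac (StructuredArrow.mk (β i)).right (StructuredArrow.mk (β i)).hom =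
      ⟨i, 𝟙 (tgt i)⟩ := h
  rw [h']
  simp
  rfl

/-- The glossy cone is a limit cone. -/
noncomputable def glossyIsLimit (G : A ⥤ S) : IsLimit (glossyCone Φ β hfac G) where
  lift c := Pi.lift (fun i => c.π.app (StructuredArrow.mk (β i)))
  fac c j := by
    have hw := c.w (StructuredArrow.homMk (gfac Φ β hfac j.right j.hom).2
        (gfac_spec Φ β hfac j.right j.hom) :
      (StructuredArrow.mk (β (gfac Φ β hfac j.right j.hom).1) :
        StructuredArrow (Φ.obj b) Φ) ⟶ j)
    rw [glossyCone_π_app]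
    exact (Category.assoc _ _ _).symm.trans ((congrArg (· ≫ G.map _)
      (Pi.lift_π (fun i => c.π.app (StructuredArrow.mk (β i))) _)).trans hw)
  uniq c m hm := by
    refine Pi.hom_ext _ _ (fun i => ?_)
    have h1 := hm (StructuredArrow.mk (β i))
    rw [glossyCone_π_mk] at h1
    exact h1.trans (Pi.lift_π (f := fun i => G.obj (tgt i))
      (fun i => c.π.app (StructuredArrow.mk (β i))) i).symm

/-- Comparison isomorphism: the value of the right Kan extension at `Φ.obj b`. -/
noncomputable def glossyRanIso (G : A ⥤ S) :
    (Φ.ran.obj G).obj (Φ.obj b) ≅ ∏ᶜ (fun i => G.obj (tgt i)) :=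
  Φ.ranObjObjIsoLimit G (Φ.obj b) ≪≫
    IsLimit.conePointUniqueUpToIso (limit.isLimit _) (glossyIsLimit Φ β hfac G)

lemma glossyRanIso_hom_π (G : A ⥤ S) (i : ι) :
    (glossyRanIso Φ β hfac G).hom ≫ Pi.π (fun i => G.obj (tgt i)) i =
      (Φ.ran.obj G).map (β i) ≫ (Φ.ranCounit.app G).app (tgt i) := by
  have h1 : (IsLimit.conePointUniqueUpToIso
      (limit.isLimit (StructuredArrow.proj (Φ.obj b) Φ ⋙ G))
      (glossyIsLimit Φ β hfac G)).hom ≫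
      (glossyCone Φ β hfac G).π.app (StructuredArrow.mk (β i)) =
      limit.π _ (StructuredArrow.mk (β i)) :=
    IsLimit.conePointUniqueUpToIso_hom_comp _ _ _
  rw [glossyCone_π_mk] at h1
  have h3 := Φ.ranObjObjIsoLimit_hom_π G (Φ.obj b) (StructuredArrow.mk (β i))
  rw [glossyRanIso]
  rw [Iso.trans_hom, Category.assoc]
  exact (congrArg (CategoryStruct.comp _) h1).trans h3

lemma glossyRanIso_naturality {E F : A ⥤ S} (η : E ⟶ F) :
    (Φ.ran.map η).app (Φ.obj b) ≫ (glossyRanIso Φ β hfac F).hom =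
      (glossyRanIso Φ β hfac E).hom ≫ Limits.Pi.map (fun i => η.app (tgt i)) := by
  refine Pi.hom_ext _ _ (fun i => ?_)
  rw [Category.assoc, glossyRanIso_hom_π, Category.assoc, aux_pi_map_π]
  conv_rhs => rw [← Category.assoc, glossyRanIso_hom_π]
  have h5 := (Φ.ran.map η).naturality (β i)
  have h6 := congr_app (Φ.ranCounit.naturality η) (tgt i)
  dsimp at h6
  rw [← Category.assoc, ← h5, Category.assoc, h6, Category.assoc]

end GlossyAux

section WhiskerCofibrant

variable {S : Type u} [Category.{v} S]

/-- Key lemma: for a left glossy morphism of pairs with `D = Φ(B)`, the restriction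
along `Φ` of a `D`-cofibrant object is `B`-cofibrant. -/
lemma aux_whisker_cofibrant [HasLimits S] [HasColimits S] (P : ModelStructure S)
    {I J : MorphismProperty S} (hcg : IsCofGen P I J)
    {A : Type v} [SmallCategory A] {C : Type v} [SmallCategory C]
    (Φ : A ⥤ C) {B : Set A} {D : Set C} (hD : D = Φ.obj '' B) (hgl : LeftGlossy Φ B)
    (UA : RelStructure P A B) (UC : RelStructure P C D)
    {Y : C ⥤ S} (hY : UC.N.cof (initial.to Y)) :
    UA.N.cof (initial.to (Φ ⋙ Y)) := by
  rw [UA.cof_eq]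
  intro E F η hη
  have hηD : ∀ d ∈ D, inter P.weq P.fib ((Φ.ran.map η).app d) := by
    intro d hd
    rw [hD] at hd
    obtain ⟨b, hb, rfl⟩ := hd
    obtain ⟨ι, tgt, β, htgt, hfac⟩ := hgl b hb
    have hpi : rlp I (Limits.Pi.map (fun i => η.app (tgt i))) := by
      refine aux_rlp_pi I _ (fun i => ?_)
      rw [← hcg.trivFib_eq]
      exact ⟨hη.1 (tgt i) (htgt i), hη.2 (tgt i) (htgt i)⟩
    have hrlp : rlp I ((Φ.ran.map η).app (Φ.obj b)) := by
      intro X' Y' f hf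
      haveI := hpi f hf
      have earrow : Arrow.mk (Limits.Pi.map (fun i => η.app (tgt i))) ≅
          Arrow.mk ((Φ.ran.map η).app (Φ.obj b)) :=
        Arrow.isoMk (glossyRanIso Φ β hfac E).symm (glossyRanIso Φ β hfac F).symm (by
          dsimp
          rw [Iso.inv_comp_eq, ← Category.assoc, ← glossyRanIso_naturality,
            Category.assoc, Iso.hom_inv_id, Category.comp_id])
      exact HasLiftingProperty.of_arrow_iso_right f earrow
    rw [← hcg.trivFib_eq] at hrlp
    exact hrlp
  have hη'w : UC.N.weq (Φ.ran.map η) := by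
    rw [UC.weq_eq]; exact fun d hd => (hηD d hd).1
  have hη'f : UC.N.fib (Φ.ran.map η) := by
    rw [UC.fib_eq]; exact fun d hd => (hηD d hd).2
  haveI := UC.N.cof_lift (initial.to Y) (Φ.ran.map η) hY hη'w hη'f
  constructor
  intro top bot sq
  have sq2 : CommSq (initial.to (Φ.ran.obj E)) (initial.to Y) (Φ.ran.map η)
      ((Φ.ranAdjunction S).homEquiv Y F bot) := ⟨initial.hom_ext _ _⟩
  refine ⟨⟨⟨((Φ.ranAdjunction S).homEquiv Y E).symm sq2.lift, initial.hom_ext _ _, ?_⟩⟩⟩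
  have h4 : (((Φ.ranAdjunction S).homEquiv Y E).symm sq2.lift) ≫ η =
      ((Φ.ranAdjunction S).homEquiv Y F).symm (sq2.lift ≫ Φ.ran.map η) :=
    (Adjunction.homEquiv_naturality_right_symm _ _ _).symm
  rw [h4, sq2.fac_right, Equiv.symm_apply_apply]

end WhiskerCofibrant

end AuxiliaryLemmas

/-- left glossy invariance of codescent
(Balmer–Matthey, Theorem 8.13). -/
theorem statement_15 {S : Type u} [Category.{v} S] [HasLimits S] [HasColimits S]
    (P : ModelStructure S) (I J : MorphismProperty S) (hcg : IsCofGen P I J)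
    {A : Type v} [SmallCategory A] {C : Type v} [SmallCategory C]
    (Φ : A ⥤ C) (B : Set A) (D : Set C) (hD : D = Φ.obj '' B)
    (hgl : LeftGlossy Φ B)
    (UA : RelStructure P A B) (UC : RelStructure P C D) (X : C ⥤ S) :
    (∀ a : A, CodescentAt P UC X (Φ.obj a) ↔
      CodescentAt P UA (((Functor.whiskeringLeft A C S).obj Φ).obj X) a) ∧
    ((∀ a : A, CodescentAt P UC X (Φ.obj a)) ↔
      Codescent P UA (((Functor.whiskeringLeft A C S).obj Φ).obj X)) := by
  have hmain : ∀ a : A, (P.weq ((cofRepHom UC.N X).app (Φ.obj a)) ↔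
      P.weq ((cofRepHom UA.N (((Functor.whiskeringLeft A C S).obj Φ).obj X)).app a)) := by
    intro a
    have hqC : inter UC.N.weq UC.N.fib (cofRepHom UC.N X) :=
      UC.N.fact₁.mem_right _
    have hqA : inter UA.N.weq UA.N.fib
        (cofRepHom UA.N (((Functor.whiskeringLeft A C S).obj Φ).obj X)) :=
      UA.N.fact₁.mem_right _
    have hQAcof : UA.N.cof
        (initial.to (cofRep UA.N (((Functor.whiskeringLeft A C S).obj Φ).obj X))) := by
      have h := UA.N.fact₁.mem_left
        (Arrow.mk (initial.to (((Functor.whiskeringLeft A C S).obj Φ).obj X)))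
      have heq : initial.to (cofRep UA.N (((Functor.whiskeringLeft A C S).obj Φ).obj X)) =
          UA.N.fact₁.ι.app
            (Arrow.mk (initial.to (((Functor.whiskeringLeft A C S).obj Φ).obj X))) :=
        initial.hom_ext _ _
      rw [heq]; exact h
    have hQCcof : UC.N.cof (initial.to (cofRep UC.N X)) := by
      have h := UC.N.fact₁.mem_left (Arrow.mk (initial.to X))
      have heq : initial.to (cofRep UC.N X) =
          UC.N.fact₁.ι.app (Arrow.mk (initial.to X)) := initial.hom_ext _ _
      rw [heq]; exact h
    -- weak equivalence and fibration properties of the whiskered replacement map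
    have hwqCw : UA.N.weq (Functor.whiskerLeft Φ (cofRepHom UC.N X) :
        ((Functor.whiskeringLeft A C S).obj Φ).obj (cofRep UC.N X) ⟶
          ((Functor.whiskeringLeft A C S).obj Φ).obj X) := by
      rw [UA.weq_eq]
      intro b hb
      have hmem : Φ.obj b ∈ D := by rw [hD]; exact ⟨b, hb, rfl⟩
      have h1 := hqC.1
      rw [UC.weq_eq] at h1
      exact h1 (Φ.obj b) hmem
    have hwqCf : UA.N.fib (Functor.whiskerLeft Φ (cofRepHom UC.N X) :
        ((Functor.whiskeringLeft A C S).obj Φ).obj (cofRep UC.N X) ⟶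
          ((Functor.whiskeringLeft A C S).obj Φ).obj X) := by
      rw [UA.fib_eq]
      intro b hb
      have hmem : Φ.obj b ∈ D := by rw [hD]; exact ⟨b, hb, rfl⟩
      have h2 := hqC.2
      rw [UC.fib_eq] at h2
      exact h2 (Φ.obj b) hmem
    -- the comparison lift
    haveI := UA.N.cof_lift
      (initial.to (cofRep UA.N (((Functor.whiskeringLeft A C S).obj Φ).obj X)))
      (Functor.whiskerLeft Φ (cofRepHom UC.N X)) hQAcof hwqCw hwqCf
    have sqL : CommSq (initial.to (((Functor.whiskeringLeft A C S).obj Φ).obj (cofRep UC.N X)))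
        (initial.to (cofRep UA.N (((Functor.whiskeringLeft A C S).obj Φ).obj X)))
        (Functor.whiskerLeft Φ (cofRepHom UC.N X))
        (cofRepHom UA.N (((Functor.whiskeringLeft A C S).obj Φ).obj X)) := ⟨initial.hom_ext _ _⟩
    have hl : sqL.lift ≫ Functor.whiskerLeft Φ (cofRepHom UC.N X) =
        cofRepHom UA.N (((Functor.whiskeringLeft A C S).obj Φ).obj X) := sqL.fac_right
    have hwl : UA.N.weq sqL.lift :=
      UA.N.weq_cancel_right _ _ hwqCw (by rw [hl]; exact hqA.1)
    -- factor the comparison lift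
    have hfacl : UA.N.fact₂.ι.app (Arrow.mk sqL.lift) ≫
        UA.N.fact₂.π.app (Arrow.mk sqL.lift) = sqL.lift := UA.N.fact₂.fac _
    have hu := UA.N.fact₂.mem_left (Arrow.mk sqL.lift)
    have hv := UA.N.fact₂.mem_right (Arrow.mk sqL.lift)
    have hwv : UA.N.weq (UA.N.fact₂.π.app (Arrow.mk sqL.lift)) :=
      UA.N.weq_cancel_left _ _ hu.1 (by rw [hfacl]; exact hwl)
    -- the middle object of the factorization is cofibrant
    have hZcof : UA.N.cof (initial.to (UA.N.fact₂.Z.obj (Arrow.mk sqL.lift))) := by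
      have heq : initial.to (UA.N.fact₂.Z.obj (Arrow.mk sqL.lift)) =
          initial.to (cofRep UA.N (((Functor.whiskeringLeft A C S).obj Φ).obj X)) ≫
            UA.N.fact₂.ι.app (Arrow.mk sqL.lift) := initial.hom_ext _ _
      have h1 : dCof P B
          (initial.to (cofRep UA.N (((Functor.whiskeringLeft A C S).obj Φ).obj X))) :=
        aux_dCof_of_cof UA hQAcof
      have h2 : dCof P B (UA.N.fact₂.ι.app (Arrow.mk sqL.lift)) :=
        aux_dCof_of_cof UA hu.2
      rw [heq]
      exact aux_cof_of_dCof UA (aux_dCof_comp h1 h2)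
    -- Φ ⋙ QC is cofibrant (key glossy input)
    have hPhiQCcof : UA.N.cof (initial.to (Φ ⋙ cofRep UC.N X)) :=
      aux_whisker_cofibrant P hcg Φ hD hgl UA UC hQCcof
    -- componentwise weak equivalences
    have wu := aux_trivCof_app_weq P hcg UA _ hu.1 hu.2 a
    have wv := aux_trivFib_app_weq P hcg UA _ hwv hv hZcof hPhiQCcof a
    have happ : sqL.lift.app a = (UA.N.fact₂.ι.app (Arrow.mk sqL.lift)).app a ≫
        (UA.N.fact₂.π.app (Arrow.mk sqL.lift)).app a := by
      conv_lhs => rw [← hfacl]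
      rfl
    have wl : P.weq (sqL.lift.app a) := by
      rw [happ]
      exact P.weq_comp _ _ wu wv
    have hqa : (cofRepHom UA.N (((Functor.whiskeringLeft A C S).obj Φ).obj X)).app a =
        sqL.lift.app a ≫ (cofRepHom UC.N X).app (Φ.obj a) := by
      conv_lhs => rw [← hl]
      rfl
    constructor
    · intro h
      rw [hqa]
      exact P.weq_comp _ _ wl h
    · intro h
      rw [hqa] at h
      exact P.weq_cancel_left _ _ wl h
  exact ⟨hmain, ⟨fun h a => (hmain a).mp (h a), fun h a => (hmain a).mpr (h a)⟩⟩
end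

section
/- Let S be a cofibrantly generated model category, (C, D) a pair of small categories, c an object of C, and set D_c := {d ∈ D | Hom_C(d, c) ≠ ∅}. Then for X ∈ S^C, X satisfies D-codescent at c if and only if X satisfies D_c-codescent at c. -/
/-! Preliminaries: basic notions of homotopical algebra (lifting properties,
model structures, transfinite compositions, relative cell complexes, smallness,
cofibrant generation) and the relative model structure `U_S(C,D)` on functor
categories, following Balmer–Matthey, "Codescent theory I". -/

universe w v u u₂ u₃

open CategoryTheory Limits

open Codescent

/-! ### Auxiliary material for the proof of Statement 16 -/

namespace Codescent16

open Codescent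

section ModelBasics

variable {M : Type u₂} [Category.{u₃} M]

lemma retractHom_mk {X Y X' Y' : M} {f : X ⟶ Y} {g : X' ⟶ Y'}
    (a : X ⟶ X') (b : Y ⟶ Y') (a' : X' ⟶ X) (b' : Y' ⟶ Y)
    (w1 : a ≫ g = f ≫ b) (w2 : a' ≫ f = g ≫ b')
    (ha : a ≫ a' = 𝟙 X) (hb : b ≫ b' = 𝟙 Y) : RetractHom f g := by
  refine ⟨Arrow.homMk (u := a) (v := b) w1, Arrow.homMk (u := a') (v := b') w2, ?_⟩
  apply Arrow.hom_ext <;> simpa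

lemma retractHom_conj {X Y X' Y' : M} {f : X ⟶ Y} {g : X' ⟶ Y'} (u : X ⟶ X') (v : Y' ⟶ Y)
    [IsIso u] [IsIso v] (h : f = u ≫ g ≫ v) : RetractHom f g := by
  refine retractHom_mk u (inv v) (inv u) v ?_ ?_ (by simp) (by simp)
  · rw [h]; simp
  · rw [h]; simp

variable (P : ModelStructure M)

lemma weq_id (X : M) : P.weq (𝟙 X) := by
  obtain ⟨hw, _⟩ := P.fact₂.mem_left (Arrow.mk (𝟙 X))
  have fac := P.fact₂.fac (Arrow.mk (𝟙 X))
  refine P.weq_retract _ _ (retractHom_mk (𝟙 X) (P.fact₂.ι.app (Arrow.mk (𝟙 X))) (𝟙 X)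
    (P.fact₂.π.app (Arrow.mk (𝟙 X))) (by simp) (by rw [Category.comp_id]; exact fac.symm) (by simp) fac) hw

lemma fib_id (X : M) : P.fib (𝟙 X) := by
  have hf := P.fact₂.mem_right (Arrow.mk (𝟙 X))
  have fac := P.fact₂.fac (Arrow.mk (𝟙 X))
  refine P.fib_retract _ _ (retractHom_mk (P.fact₂.ι.app (Arrow.mk (𝟙 X))) (𝟙 X)
    (P.fact₂.π.app (Arrow.mk (𝟙 X))) (𝟙 X) (by rw [Category.comp_id]; exact fac) (by simp [← fac])
    fac (by simp)) hf

lemma weq_of_isIso {X Y : M} (f : X ⟶ Y) [IsIso f] : P.weq f :=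
  P.weq_retract f (𝟙 Y) (retractHom_conj f (𝟙 Y) (by simp)) (weq_id P Y)

lemma weq_conj {X Y X' Y' : M} {f : X ⟶ Y} {g : X' ⟶ Y'} (u : X ⟶ X') (v : Y' ⟶ Y)
    [IsIso u] [IsIso v] (h : f = u ≫ g ≫ v) (hg : P.weq g) : P.weq f :=
  P.weq_retract f g (retractHom_conj u v h) hg

lemma fib_of_isIso {X Y : M} (f : X ⟶ Y) [IsIso f] : P.fib f :=
  P.fib_retract f (𝟙 Y) (retractHom_conj f (𝟙 Y) (by simp)) (fib_id P Y)

lemma fib_conj {X Y X' Y' : M} {f : X ⟶ Y} {g : X' ⟶ Y'} (u : X ⟶ X') (v : Y' ⟶ Y)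
    [IsIso u] [IsIso v] (h : f = u ≫ g ≫ v) (hg : P.fib g) : P.fib f :=
  P.fib_retract f g (retractHom_conj u v h) hg

end ModelBasics

lemma mprop_iff {M : Type u₂} [Category.{u₃} M] {P Q : MorphismProperty M} (h : P = Q)
    {X Y : M} (f : X ⟶ Y) : P f ↔ Q f := by subst h; rfl

section LlpBasics

variable {M : Type u₂} [Category.{u₃} M] {K : MorphismProperty M}

lemma llp_comp {X Y Z : M} {f : X ⟶ Y} {g : Y ⟶ Z} (hf : llp K f) (hg : llp K g) :
    llp K (f ≫ g) := fun _ _ p hp => by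
  haveI := hf p hp; haveI := hg p hp; infer_instance

lemma llp_of_isPushout {Z X Y Q : M} {f : Z ⟶ X} {g : Z ⟶ Y} {inl : X ⟶ Q} {inr : Y ⟶ Q}
    (h : IsPushout f g inl inr) (hf : llp K f) : llp K inr := by
  intro A' B' p hp
  haveI := hf p hp
  constructor
  intro u v sq
  have sq1 : CommSq (g ≫ u) f p (inl ≫ v) :=
    ⟨by rw [Category.assoc, sq.w, ← Category.assoc, ← h.w, Category.assoc]⟩
  refine ⟨⟨⟨h.desc sq1.lift u sq1.fac_left, h.inr_desc _ _ _, ?_⟩⟩⟩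
  apply h.hom_ext
  · rw [← Category.assoc, h.inl_desc, sq1.fac_right]
  · rw [← Category.assoc, h.inr_desc, sq.w]

end LlpBasics


section Products

variable {S : Type u} [Category.{v} S] [HasLimits S]

lemma pi_map_π {T : Type v} {A B : S} (g : A ⟶ B) (φ : T) :
    Limits.Pi.map (fun _ : T => g) ≫ Pi.π _ φ = Pi.π _ φ ≫ g :=
  limMap_π _ _

lemma rlp_pi (K : MorphismProperty S) {A B : S} {g : A ⟶ B} (hg : rlp K g) (T : Type v) :
    rlp K (Limits.Pi.map (fun (_ : T) => g)) := by
  intro A' B' a ha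
  haveI := hg a ha
  constructor
  intro u v sq
  have sqc : ∀ φ : T, CommSq (u ≫ Pi.π _ φ) a g (v ≫ Pi.π _ φ) := fun φ =>
    ⟨by rw [Category.assoc, ← pi_map_π g φ, ← Category.assoc, sq.w, Category.assoc]⟩
  refine ⟨⟨⟨Pi.lift (fun φ => (sqc φ).lift), ?_, ?_⟩⟩⟩
  · apply Pi.hom_ext; intro φ
    rw [Category.assoc, Pi.lift_π, (sqc φ).fac_left]
  · apply Pi.hom_ext; intro φ
    rw [Category.assoc, pi_map_π, ← Category.assoc, Pi.lift_π, (sqc φ).fac_right]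

variable {C : Type v} [SmallCategory C]

/-- The right adjoint to evaluation at `c`, sending `A` to `x ↦ A^{Hom(x,c)}`. -/
noncomputable def RcF (c : C) (A : S) : C ⥤ S where
  obj x := ∏ᶜ fun (_ : x ⟶ c) => A
  map {x y} α := Pi.lift fun ψ => Pi.π _ (α ≫ ψ)
  map_id x := by apply Pi.hom_ext; intro ψ; simp
  map_comp {x y z} α β := by apply Pi.hom_ext; intro ψ; simp

/-- The natural transformation induced by `g : A ⟶ B` on `RcF`. -/
noncomputable def RcNat (c : C) {A B : S} (g : A ⟶ B) : RcF c A ⟶ RcF c B where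
  app x := Limits.Pi.map fun _ => g
  naturality x y α := by
    apply Pi.hom_ext; intro ψ
    erw [Category.assoc, Category.assoc, pi_map_π, ← Category.assoc]
    erw [Pi.lift_π, Pi.lift_π]
    erw [pi_map_π]; rfl

lemma RcNat_app_π (c : C) {A B : S} (g : A ⟶ B) (x : C) (ψ : x ⟶ c) :
    (RcNat c g).app x ≫ Pi.π _ ψ = Pi.π _ ψ ≫ g :=
  pi_map_π g ψ

end Products

section LemmaD

variable {S : Type u} [Category.{v} S] [HasLimits S] [HasColimits S]
variable {C : Type v} [SmallCategory C]

/-- Lemma D: a trivial cofibration in a relative model structure `U_S(C,Dc)` is an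
objectwise weak equivalence (at every object of `C`). -/
lemma weq_app_of_weq_cof (P : ModelStructure S) (Jgen : MorphismProperty S)
    (hfib : P.fib = rlp Jgen) {Dc : Set C} (U : RelStructure P C Dc) (c : C)
    {V W : C ⥤ S} (j : V ⟶ W) (hwj : U.N.weq j) (hcj : U.N.cof j) : P.weq (j.app c) := by
  -- Step 1: `j.app c` has the left lifting property against all fibrations of `P`.
  have hlift : ∀ ⦃X Y : S⦄ (g : X ⟶ Y), P.fib g → HasLiftingProperty (j.app c) g := by
    intro X Y g hg
    have hR : U.N.fib (RcNat c g) := by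
      rw [U.fib_eq]
      intro d _
      have hh : P.fib g := hg
      rw [hfib] at hh ⊢
      exact rlp_pi Jgen hh (d ⟶ c)
    haveI := U.N.fib_lift j (RcNat c g) hwj hcj hR
    constructor
    intro u v sq
    -- transpose the square to the functor category
    let uS : V ⟶ RcF c X :=
      { app := fun x => Pi.lift fun φ => V.map φ ≫ u
        naturality := by
          intro x y α
          apply Pi.hom_ext; intro ψ
          simp [RcF] }
    let vS : W ⟶ RcF c Y :=
      { app := fun x => Pi.lift fun φ => W.map φ ≫ v
        naturality := by
          intro x y α
          apply Pi.hom_ext; intro ψ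
          simp [RcF] }
    have sq2 : CommSq uS j (RcNat c g) vS := by
      constructor
      ext x
      apply Pi.hom_ext; intro ψ
      have hnat : j.app x ≫ W.map ψ = V.map ψ ≫ j.app c := (j.naturality ψ).symm
      simp only [NatTrans.comp_app, Category.assoc, uS, vS]
      erw [Category.assoc, Category.assoc, RcNat_app_π, ← Category.assoc, Pi.lift_π, Pi.lift_π, Category.assoc, sq.w,
        ← Category.assoc, ← Category.assoc, hnat]
    refine ⟨⟨⟨sq2.lift.app c ≫ Pi.π _ (𝟙 c), ?_, ?_⟩⟩⟩
    · erw [← Category.assoc, ← NatTrans.comp_app, sq2.fac_left]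
      simp [uS]; erw [Pi.lift_π]; simp
    · have h : sq2.lift.app c ≫ (RcNat c g).app c = vS.app c := by
        rw [← NatTrans.comp_app, sq2.fac_right]
      erw [Category.assoc, ← RcNat_app_π c g c (𝟙 c), ← Category.assoc, h]
      simp [vS]; erw [Pi.lift_π]; simp
  -- Step 2: retract argument.
  have hi := P.fact₂.mem_left (Arrow.mk (j.app c))
  have hp := P.fact₂.mem_right (Arrow.mk (j.app c))
  have fac := P.fact₂.fac (Arrow.mk (j.app c))
  haveI := hlift (Y := W.obj c) _ hp
  have sqr : @CommSq _ _ (V.obj c) _ (W.obj c) (W.obj c) (P.fact₂.ι.app (Arrow.mk (j.app c))) (j.app c)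
      (P.fact₂.π.app (Arrow.mk (j.app c))) (𝟙 _) := ⟨by erw [Category.comp_id]; exact fac⟩
  haveI : sqr.HasLift := (hlift _ hp).sq_hasLift sqr
  exact P.weq_retract _ _
    (retractHom_mk (𝟙 _) sqr.lift (𝟙 _) (P.fact₂.π.app (Arrow.mk (j.app c)))
      (by erw [Category.id_comp]; exact sqr.fac_left.symm) (by rw [Category.id_comp]; exact fac.symm)
      (by simp) sqr.fac_right) hi.1

end LemmaD

section Brown

variable {S : Type u} [Category.{v} S] [HasLimits S] [HasColimits S]
variable {C : Type v} [SmallCategory C]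

/-- Lemma C (Ken Brown's argument): a `Dc`-weak equivalence between `Dc`-cofibrant
objects is an objectwise weak equivalence. -/
lemma weq_app_of_weq_cofibrant (P : ModelStructure S) (Jgen : MorphismProperty S)
    (hfib : P.fib = rlp Jgen) {Dc : Set C} (U : RelStructure P C Dc) (c : C)
    {A B : C ⥤ S} (k : A ⟶ B) (hA : U.N.cof (initial.to A)) (hB : U.N.cof (initial.to B))
    (hk : U.N.weq k) : P.weq (k.app c) := by
  -- factor `(k, 𝟙) : A ⨿ B ⟶ B` as a cofibration followed by a trivial fibration
  let m : A ⨿ B ⟶ B := coprod.desc k (𝟙 B)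
  let i := U.N.fact₁.ι.app (Arrow.mk m)
  let p := U.N.fact₁.π.app (Arrow.mk m)
  have fac : i ≫ p = m := U.N.fact₁.fac (Arrow.mk m)
  have hicof : U.N.cof i := U.N.fact₁.mem_left (Arrow.mk m)
  have hp := U.N.fact₁.mem_right (Arrow.mk m)
  -- the two inclusions are cofibrations
  have hpo : IsPushout (initial.to A) (initial.to B) (coprod.inl : A ⟶ A ⨿ B) coprod.inr :=
    IsPushout.of_hasBinaryCoproduct' A B
  have hinl : U.N.cof (coprod.inl : A ⟶ A ⨿ B) :=
    (mprop_iff U.cof_eq _).2 (llp_of_isPushout hpo.flip ((mprop_iff U.cof_eq _).1 hB))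
  have hinr : U.N.cof (coprod.inr : B ⟶ A ⨿ B) :=
    (mprop_iff U.cof_eq _).2 (llp_of_isPushout hpo ((mprop_iff U.cof_eq _).1 hA))
  have hjcof : U.N.cof (coprod.inl ≫ i) :=
    (mprop_iff U.cof_eq _).2 (llp_comp ((mprop_iff U.cof_eq _).1 hinl)
      ((mprop_iff U.cof_eq _).1 hicof))
  have hscof : U.N.cof (coprod.inr ≫ i) :=
    (mprop_iff U.cof_eq _).2 (llp_comp ((mprop_iff U.cof_eq _).1 hinr)
      ((mprop_iff U.cof_eq _).1 hicof))
  have hjp : (coprod.inl ≫ i) ≫ p = k := by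
    erw [Category.assoc, fac]; simp [m]; exact coprod.inl_desc _ _
  have hsp : (coprod.inr ≫ i) ≫ p = 𝟙 B := by
    erw [Category.assoc, fac]; simp [m]; exact coprod.inr_desc _ _
  -- weak equivalences by two-out-of-three
  have hsweq : U.N.weq (coprod.inr ≫ i) := by
    refine U.N.weq_cancel_right _ p hp.1 ?_
    rw [hsp]; exact weq_id U.N B
  have hjweq : U.N.weq (coprod.inl ≫ i) := by
    refine U.N.weq_cancel_right _ p hp.1 ?_
    rw [hjp]; exact hk
  -- apply Lemma D to both trivial cofibrations
  have hjapp : P.weq ((coprod.inl ≫ i).app c) := weq_app_of_weq_cof P Jgen hfib U c _ hjweq hjcof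
  have hsapp : P.weq ((coprod.inr ≫ i).app c) := weq_app_of_weq_cof P Jgen hfib U c _ hsweq hscof
  -- hence `p.app c` is a weak equivalence, and so is `k.app c`
  have hpapp : P.weq (p.app c) := by
    refine P.weq_cancel_left ((coprod.inr ≫ i).app c) (p.app c) hsapp ?_
    rw [← NatTrans.comp_app, hsp]
    exact weq_id P (B.obj c)
  have : P.weq (((coprod.inl ≫ i) ≫ p).app c) := by
    rw [NatTrans.comp_app]
    exact P.weq_comp _ _ hjapp hpapp
  rw [hjp] at this
  exact this

end Brown


section Kan

variable {S : Type u} [Category.{v} S] [HasLimits S] [HasColimits S]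
variable {C : Type v} [SmallCategory C]

/-- The full subcategory on `D_c ∪ {c}`. -/
def Eprop (D : Set C) (c : C) : C → Prop := fun x => (x ∈ D ∧ Nonempty (x ⟶ c)) ∨ x = c

abbrev ECat (D : Set C) (c : C) := ObjectProperty.FullSubcategory (Eprop D c)

abbrev incl (D : Set C) (c : C) : ECat D c ⥤ C := ObjectProperty.ι (Eprop D c)

lemma isEmpty_structuredArrow (D : Set C) (c : C) (d : C) (hd : d ∈ D)
    (hdc : ¬ (d ∈ D ∧ Nonempty (d ⟶ c))) : IsEmpty (StructuredArrow d (incl D c)) := by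
  constructor
  intro f
  rcases f.right.property with he | he
  · exact hdc ⟨hd, ⟨f.hom ≫ he.2.some⟩⟩
  · exact hdc ⟨hd, ⟨f.hom ≫ eqToHom he⟩⟩

/-- The right Kan extension along `incl D c` of the restriction of a trivial
`D_c`-fibration is a trivial `D`-fibration. -/
lemma ran_trivFib (D : Set C) (c : C) (P : ModelStructure S) {G H : C ⥤ S} (g : G ⟶ H)
    (hg : dTrivFib P {d | d ∈ D ∧ Nonempty (d ⟶ c)} g) :
    dTrivFib P D
      ((incl D c).ran.map (((Functor.whiskeringLeft (ECat D c) C S).obj (incl D c)).map g)) := by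
  set ι := incl D c
  set ρ := (Functor.whiskeringLeft (ECat D c) C S).obj ι with hρ
  have key : ∀ d ∈ D, P.weq ((ι.ran.map (ρ.map g)).app d) ∧ P.fib ((ι.ran.map (ρ.map g)).app d) := by
    intro d hd
    by_cases hdc : d ∈ D ∧ Nonempty (d ⟶ c)
    · -- `d ∈ D_c` : use the counit isomorphism
      let e : ECat D c := ⟨d, Or.inl hdc⟩
      have hnat := ι.ranCounit.naturality (ρ.map g)
      have happ := congr_arg (fun (t : ρ.obj (ι.ran.obj (ρ.obj G)) ⟶ ρ.obj H) => t.app e) hnat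
      simp only [NatTrans.comp_app] at happ
      set a := (ι.ranCounit.app (ρ.obj G)).app e with ha
      set b := (ι.ranCounit.app (ρ.obj H)).app e with hb2
      haveI : IsIso (ι.ranCounit.app (ρ.obj G)) := inferInstance
      haveI : IsIso (ι.ranCounit.app (ρ.obj H)) := inferInstance
      haveI : IsIso a := by rw [ha]; infer_instance
      haveI : IsIso b := by rw [hb2]; infer_instance
      have happ2 : (ρ.map (ι.ran.map (ρ.map g))).app e ≫ b = a ≫ (ρ.map g).app e := by
        exact happ
      have hconj : (ρ.map (ι.ran.map (ρ.map g))).app e = a ≫ (ρ.map g).app e ≫ inv b := by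
        rw [← Category.assoc, ← happ2, Category.assoc]; simp
      have hw : P.weq ((ρ.map g).app e) := hg.1 d hdc
      have hf : P.fib ((ρ.map g).app e) := hg.2 d hdc
      exact ⟨(weq_conj P a (inv b) hconj hw :
                P.weq ((ρ.map (ι.ran.map (ρ.map g))).app e)),
             (fib_conj P a (inv b) hconj hf :
                P.fib ((ρ.map (ι.ran.map (ρ.map g))).app e))⟩
    · haveI := isEmpty_structuredArrow D c d hd hdc
      have hterm : ∀ Y : ECat D c ⥤ S, IsTerminal ((ι.ran.obj Y).obj d) := by
        intro Y
        have hl : IsTerminal (limit (StructuredArrow.proj d ι ⋙ Y)) := by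
          refine IsTerminal.ofUniqueHom
            (fun W => limit.lift _ ⟨W, ⟨fun j => isEmptyElim j, by intro j j' φ; exact (IsEmpty.false j).elim⟩⟩)
            (fun W m => ?_)
          apply limit.hom_ext
          intro j
          exact isEmptyElim j
        exact hl.ofIso (ι.ranObjObjIsoLimit Y d).symm
      haveI : IsIso ((ι.ran.map (ρ.map g)).app d) :=
        ⟨(hterm (ρ.obj G)).from _, (hterm (ρ.obj G)).hom_ext _ _, (hterm (ρ.obj H)).hom_ext _ _⟩
      exact ⟨weq_of_isIso P _, fib_of_isIso P _⟩
  exact ⟨fun d hd => (key d hd).1, fun d hd => (key d hd).2⟩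

/-- Lemma B (cofibrancy): if `Z` is `D`-cofibrant then `Lan_ι (Z|_E)` is `D_c`-cofibrant. -/
lemma lanRes_cofibrant (D : Set C) (c : C) (P : ModelStructure S) (Z : C ⥤ S)
    (hZ : dCof P D (initial.to Z)) :
    dCof P {d | d ∈ D ∧ Nonempty (d ⟶ c)}
      (initial.to ((incl D c).lan.obj
        (((Functor.whiskeringLeft (ECat D c) C S).obj (incl D c)).obj Z))) := by
  set ι := incl D c
  set ρ := (Functor.whiskeringLeft (ECat D c) C S).obj ι with hρ
  set adjL := ι.lanAdjunction S with hadjL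
  set adjR := ι.ranAdjunction S with hadjR
  intro G H g hg
  haveI := hZ _ (ran_trivFib D c P g hg)
  constructor
  intro u v sq
  let v1 : ρ.obj Z ⟶ ρ.obj H := adjL.homEquiv (ρ.obj Z) H v
  let v2 : Z ⟶ ι.ran.obj (ρ.obj H) := adjR.homEquiv Z (ρ.obj H) v1
  have sq2 : CommSq (initial.to (ι.ran.obj (ρ.obj G))) (initial.to Z)
      (ι.ran.map (ρ.map g)) v2 := ⟨initial.hom_ext _ _⟩
  let ℓ1 : ρ.obj Z ⟶ ρ.obj G := (adjR.homEquiv Z (ρ.obj G)).symm sq2.lift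
  have hℓ1 : ℓ1 ≫ ρ.map g = v1 := by
    have h1 : (adjR.homEquiv Z (ρ.obj H)).symm (sq2.lift ≫ ι.ran.map (ρ.map g)) =
        (adjR.homEquiv Z (ρ.obj G)).symm sq2.lift ≫ ρ.map g :=
      Adjunction.homEquiv_naturality_right_symm _ _ _
    rw [← h1, sq2.fac_right]
    exact (adjR.homEquiv Z (ρ.obj H)).symm_apply_apply v1
  refine ⟨⟨⟨(adjL.homEquiv (ρ.obj Z) G).symm ℓ1, initial.hom_ext _ _, ?_⟩⟩⟩
  have h2 : (adjL.homEquiv (ρ.obj Z) H).symm (ℓ1 ≫ ρ.map g) =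
      (adjL.homEquiv (ρ.obj Z) G).symm ℓ1 ≫ g :=
    Adjunction.homEquiv_naturality_right_symm _ _ _
  rw [← h2, hℓ1]
  exact (adjL.homEquiv (ρ.obj Z) H).symm_apply_apply v

/-- The counit of the Kan adjunction is an isomorphism on objects of the subcategory. -/
lemma lan_counit_app_isIso (D : Set C) (c : C) (Z : C ⥤ S) (e : ECat D c) :
    IsIso ((((incl D c).lanAdjunction S).counit.app Z).app ((incl D c).obj e)) := by
  set ι := incl D c
  set ρ := (Functor.whiskeringLeft (ECat D c) C S).obj ι with hρ
  set adjL := ι.lanAdjunction S with hadjL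
  haveI : IsIso (adjL.unit.app (ρ.obj Z)) := by
    rw [hadjL, Functor.lanAdjunction_unit]
    infer_instance
  have h := adjL.right_triangle_components Z
  haveI : IsIso (adjL.unit.app (ρ.obj Z) ≫ ρ.map (adjL.counit.app Z)) := by
    rw [h]; exact IsIso.id _
  haveI : IsIso (ρ.map (adjL.counit.app Z)) := IsIso.of_isIso_comp_left (adjL.unit.app (ρ.obj Z)) _
  haveI : IsIso ((ρ.map (adjL.counit.app Z)).app e) := inferInstance
  exact (inferInstance : IsIso ((ρ.map (adjL.counit.app Z)).app e))


end Kan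


end Codescent16

/-- pruning lemma for objects; `D`-codescent at `c` only depends
on `D_c = {d ∈ D | Hom(d,c) ≠ ∅}` (Balmer–Matthey, Theorem 10.4). -/
theorem statement_16 {S : Type u} [Category.{v} S] [HasLimits S] [HasColimits S]
    (P : ModelStructure S) (I J : MorphismProperty S) (hcg : IsCofGen P I J)
    {C : Type v} [SmallCategory C] (D : Set C) (c : C)
    (U1 : RelStructure P C D)
    (U2 : RelStructure P C {d | d ∈ D ∧ Nonempty (d ⟶ c)})
    (X : C ⥤ S) :
    CodescentAt P U1 X c ↔ CodescentAt P U2 X c := by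
  classical
  -- notation
  let N1 := U1.N
  let N2 := U2.N
  let AX : Arrow (C ⥤ S) := Arrow.mk (initial.to X)
  let Q1 : C ⥤ S := cofRep N1 X
  let Q2 : C ⥤ S := cofRep N2 X
  let π1 : Q1 ⟶ X := cofRepHom N1 X
  let π2 : Q2 ⟶ X := cofRepHom N2 X
  -- the canonical maps are trivial fibrations of the respective structures
  have hπ1 : inter N1.weq N1.fib π1 := N1.fact₁.mem_right AX
  have hπ2 : inter N2.weq N2.fib π2 := N2.fact₁.mem_right AX
  have hπ1w : ∀ d ∈ D, P.weq (π1.app d) := fun d hd =>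
    (Codescent16.mprop_iff U1.weq_eq π1).1 hπ1.1 d hd
  have hπ2w : ∀ d, d ∈ D ∧ Nonempty (d ⟶ c) → P.weq (π2.app d) := fun d hd =>
    (Codescent16.mprop_iff U2.weq_eq π2).1 hπ2.1 d hd
  -- the replacements are cofibrant
  have hι1 : N1.cof (initial.to Q1) := by
    have h := N1.fact₁.mem_left AX
    have he : (initial.to Q1) = N1.fact₁.ι.app AX := initial.hom_ext _ _
    rw [he]; exact h
  have hι2 : N2.cof (initial.to Q2) := by
    have h := N2.fact₁.mem_left AX
    have he : (initial.to Q2) = N2.fact₁.ι.app AX := initial.hom_ext _ _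
    rw [he]; exact h
  -- the comparison object `Z' = Lan (Q1|_E)` and counit `ε : Z' ⟶ Q1`
  let ρ := (Functor.whiskeringLeft (Codescent16.ECat D c) C S).obj (Codescent16.incl D c)
  let Z' : C ⥤ S := (Codescent16.incl D c).lan.obj (ρ.obj Q1)
  let ε : Z' ⟶ Q1 := (((Codescent16.incl D c).lanAdjunction S)).counit.app Q1
  have hZ' : dCof P {d | d ∈ D ∧ Nonempty (d ⟶ c)} (initial.to Z') :=
    Codescent16.lanRes_cofibrant D c P Q1 ((Codescent16.mprop_iff U1.cof_eq _).1 hι1)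
  have hZ'cof : N2.cof (initial.to Z') := (Codescent16.mprop_iff U2.cof_eq _).2 hZ'
  -- lift to get `k : Z' ⟶ Q2` over `X`
  haveI : HasLiftingProperty (initial.to Z') π2 := N2.cof_lift _ π2 hZ'cof hπ2.1 hπ2.2
  have sqk : CommSq (initial.to Q2) (initial.to Z') π2 (ε ≫ π1) := ⟨initial.hom_ext _ _⟩
  let k : Z' ⟶ Q2 := sqk.lift
  have hk : k ≫ π2 = ε ≫ π1 := sqk.fac_right
  -- `k` is a weak equivalence of `U2`
  have hkw : N2.weq k := by
    apply (Codescent16.mprop_iff U2.weq_eq k).2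
    intro d hd
    haveI : IsIso (ε.app d) := Codescent16.lan_counit_app_isIso D c Q1 ⟨d, Or.inl hd⟩
    have happ : k.app d ≫ π2.app d = ε.app d ≫ π1.app d := by
      rw [← NatTrans.comp_app, ← NatTrans.comp_app, hk]
    have hrhs : P.weq (ε.app d ≫ π1.app d) :=
      P.weq_comp _ _ (Codescent16.weq_of_isIso P _) (hπ1w d hd.1)
    exact P.weq_cancel_right (k.app d) (π2.app d) (hπ2w d hd) (by rw [happ]; exact hrhs)
  -- Ken Brown's lemma: `k` is a weak equivalence at `c`
  have hkc : P.weq (k.app c) :=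
    Codescent16.weq_app_of_weq_cofibrant P J hcg.fib_eq U2 c k hZ'cof hι2 hkw
  -- conclude by two-out-of-three
  have happc : k.app c ≫ π2.app c = ε.app c ≫ π1.app c := by
    rw [← NatTrans.comp_app, ← NatTrans.comp_app, hk]
  haveI : IsIso (ε.app c) := Codescent16.lan_counit_app_isIso D c Q1 ⟨c, Or.inr rfl⟩
  constructor
  · intro h1
    have h1' : P.weq (π1.app c) := h1
    have h2 : P.weq (ε.app c ≫ π1.app c) :=
      P.weq_comp _ _ (Codescent16.weq_of_isIso P _) h1'
    rw [← happc] at h2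
    exact P.weq_cancel_left _ _ hkc h2
  · intro h1
    have h1' : P.weq (π2.app c) := h1
    have h2 : P.weq (k.app c ≫ π2.app c) := P.weq_comp _ _ hkc h1'
    rw [happc] at h2
    exact P.weq_cancel_left _ _ (Codescent16.weq_of_isIso P _) h2
end

section
/- Let S be a cofibrantly generated model category and (C, D) a pair of small categories, with D regarded as a full subcategory of C. Then the derived adjunction Lind_D^C : Ho(U_S(D,D)) ⇄ Ho(U_S(C,D)) : Res_D^C, obtained from the Quillen adjunction (ind_D^C, res_D^C) between U_S(D,D) and U_S(C,D), is an adjoint equivalence of categories; in particular both the unit and the counit of this derived adjunction are isomorphisms. -/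
/-! Preliminaries: basic notions of homotopical algebra (lifting properties,
model structures, transfinite compositions, relative cell complexes, smallness,
cofibrant generation) and the relative model structure `U_S(C,D)` on functor
categories, following Balmer–Matthey, "Codescent theory I". -/

universe w v u u₂ u₃

open CategoryTheory Limits

namespace Codescent

set_option linter.dupNamespace false

section Aux

variable {M : Type u₂} [Category.{u₃} M]

/-- Every identity morphism is a weak equivalence. -/
lemma weq_id (P : ModelStructure M) (X : M) : P.weq (𝟙 X) := by
  set a : Arrow M := Arrow.mk (𝟙 X) with ha
  have fac : P.fact₂.ι.app a ≫ P.fact₂.π.app a = 𝟙 X := P.fact₂.fac a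
  have hw : P.weq (P.fact₂.ι.app a) := (P.fact₂.mem_left a).1
  refine P.weq_retract (𝟙 X) (P.fact₂.ι.app a) ?_ hw
  refine ⟨Arrow.homMk (u := 𝟙 X) (v := P.fact₂.ι.app a) (by simp; rfl),
    Arrow.homMk (u := 𝟙 X) (v := P.fact₂.π.app a) (by simp [fac]; exact (Category.id_comp _).trans fac.symm), ?_⟩
  ext
  · simp; exact Category.id_comp _
  · exact fac

/-- Every isomorphism is a weak equivalence. -/
lemma weq_of_isIso (P : ModelStructure M) {X Y : M} (f : X ⟶ Y) [IsIso f] : P.weq f := by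
  refine P.weq_retract f (𝟙 X) ?_ (weq_id P X)
  exact ⟨Arrow.homMk (u := 𝟙 X) (v := inv f) (by simp),
    Arrow.homMk (u := 𝟙 X) (v := f) (by simp), by ext <;> simp⟩

/-- If a natural transformation is an isomorphism at an object, it is an isomorphism
at any isomorphic object. -/
lemma isIso_app_of_iso {A : Type u₂} [Category.{u₃} A] {B : Type w} [Category.{v} B]
    {F G : A ⥤ B} (τ : F ⟶ G) {X Y : A} (e : X ≅ Y) [IsIso (τ.app X)] :
    IsIso (τ.app Y) := by
  have h : τ.app Y = F.map e.inv ≫ τ.app X ≫ G.map e.hom := by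
    rw [← τ.naturality e.hom, ← Category.assoc, ← Functor.map_comp, e.inv_hom_id,
      CategoryTheory.Functor.map_id, Category.id_comp]
  rw [h]
  infer_instance

end Aux


end Codescent
open Codescent

/-- the derived adjunction `Lind_D^C ⊣ Res_D^C` between
`Ho(U_S(D,D))` and `Ho(U_S(C,D))` is an adjoint equivalence
(Balmer–Matthey, Theorem 12.9). -/
theorem statement_19 {S : Type u} [Category.{v} S] [HasLimits S] [HasColimits S]
    (P : ModelStructure S) (I J : MorphismProperty S) (hcg : IsCofGen P I J)
    {C : Type v} [SmallCategory C] (Dset : Set C)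
    -- the model structures `U_S(D,D)` and `U_S(C,D)`:
    (UD : RelStructure P (ObjectProperty.FullSubcategory fun c => c ∈ Dset)
      (Set.univ : Set (ObjectProperty.FullSubcategory fun c => c ∈ Dset)))
    (UCD : RelStructure P C Dset)
    -- the derived adjunction `Lind ⊣ Res` between the homotopy categories
    -- `Ho(U_S(D,D))` and `Ho(U_S(C,D))` (localizations at the respective
    -- weak equivalences):
    (Lind : (objProp P.weq
        (Set.univ : Set (ObjectProperty.FullSubcategory fun c => c ∈ Dset))).Localization ⥤
      (objProp P.weq Dset).Localization)
    (Res : (objProp P.weq Dset).Localization ⥤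
      (objProp P.weq
        (Set.univ : Set (ObjectProperty.FullSubcategory fun c => c ∈ Dset))).Localization)
    (adj : Lind ⊣ Res)
    -- `Res` is the localization of the restriction functor:
    (hRes : (objProp P.weq Dset).Q ⋙ Res ≅
      (Functor.whiskeringLeft (ObjectProperty.FullSubcategory fun c => c ∈ Dset) C S).obj
          (ObjectProperty.ι fun c => c ∈ Dset) ⋙
        (objProp P.weq (Set.univ : Set (ObjectProperty.FullSubcategory fun c => c ∈ Dset))).Q)
    -- `Lind` is the total left derived functor of the left Kan extension:
    -- `Lind [Y] = [ind_D^C (Q_{D,D} Y)]`: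
    (hLind : (objProp P.weq
        (Set.univ : Set (ObjectProperty.FullSubcategory fun c => c ∈ Dset))).Q ⋙ Lind ≅
      (qFunctor UD.N ⋙ (ObjectProperty.ι fun c => c ∈ Dset).lan (H := S)) ⋙
        (objProp P.weq Dset).Q) :
    Lind.IsEquivalence ∧ IsIso adj.unit ∧ IsIso adj.counit := by
  classical
  let Dcat := ObjectProperty.FullSubcategory fun c => c ∈ Dset
  let ι : Dcat ⥤ C := ObjectProperty.ι fun c => c ∈ Dset
  haveI hpt : ∀ F : Dcat ⥤ S, ι.HasPointwiseLeftKanExtension F := fun F Y => inferInstance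
  haveI hlan : ∀ F : Dcat ⥤ S, ι.HasLeftKanExtension F := fun F => inferInstance
  let res : (C ⥤ S) ⥤ (Dcat ⥤ S) := (Functor.whiskeringLeft Dcat C S).obj ι
  let WD : MorphismProperty (Dcat ⥤ S) := objProp P.weq (Set.univ : Set Dcat)
  let WC : MorphismProperty (C ⥤ S) := objProp P.weq Dset
  let A : ι.lan (H := S) ⊣ res := ι.lanAdjunction S
  -- the restriction functor inverts `D`-weak equivalences after localization
  have hresinv : WC.IsInvertedBy (res ⋙ WD.Q) := fun X Y f hf => by
    exact Localization.inverts WD.Q WD _ (fun d _ => hf d.1 d.2)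
  -- the left Kan extension sends `D`-weak equivalences to `D`-weak equivalences
  have hindW : ∀ {X Y : Dcat ⥤ S} (f : X ⟶ Y), WD f → WC ((ι.lan (H := S)).map f) := by
    intro X Y f hf d hd
    haveI : IsIso (A.unit.app X) := by dsimp only [A]; infer_instance
    haveI : IsIso (A.unit.app Y) := by dsimp only [A]; infer_instance
    have e : res.map ((ι.lan (H := S)).map f) = inv (A.unit.app X) ≫ (f ≫ A.unit.app Y) := by
      rw [IsIso.eq_inv_comp]
      exact (A.unit.naturality f).symm
    have h : P.weq ((res.map ((ι.lan (H := S)).map f)).app ⟨d, hd⟩) := by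
      rw [e, NatTrans.comp_app, NatTrans.comp_app]
      exact P.weq_comp _ _ (weq_of_isIso P _)
        (P.weq_comp _ _ (hf ⟨d, hd⟩ trivial) (weq_of_isIso P _))
    exact h
  have hindinv : WD.IsInvertedBy (ι.lan (H := S) ⋙ WC.Q) := fun X Y f hf => by
    exact Localization.inverts WC.Q WC _ (hindW f hf)
  -- the counit of `ind ⊣ res` is a `D`-weak equivalence
  have hcounit : ∀ X : C ⥤ S, WC (A.counit.app X) := by
    intro X d hd
    haveI : IsIso (A.unit.app (res.obj X)) := by dsimp only [A]; infer_instance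
    have tri : A.unit.app (res.obj X) ≫ res.map (A.counit.app X) = 𝟙 (res.obj X) :=
      A.right_triangle_components X
    have h : res.map (A.counit.app X) = inv (A.unit.app (res.obj X)) :=
      (IsIso.inv_eq_of_hom_inv_id tri).symm
    have h' : P.weq ((res.map (A.counit.app X)).app ⟨d, hd⟩) := by
      rw [h]
      exact weq_of_isIso P _
    exact h'
  -- the localized functors
  let Res₀ : WC.Localization ⥤ WD.Localization := Localization.lift (res ⋙ WD.Q) hresinv WC.Q
  let Lind₀ : WD.Localization ⥤ WC.Localization :=
    Localization.lift (ι.lan (H := S) ⋙ WC.Q) hindinv WD.Q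
  haveI sq1 : CatCommSq (ι.lan (H := S)) WD.Q WC.Q Lind₀ :=
    ⟨(Localization.fac _ hindinv WD.Q).symm⟩
  haveI sq2 : CatCommSq res WC.Q WD.Q Res₀ := ⟨(Localization.fac _ hresinv WC.Q).symm⟩
  let adj₀ : Lind₀ ⊣ Res₀ := A.localization WD.Q WD WC.Q WC Lind₀ Res₀
  haveI := Localization.essSurj (L := WD.Q) WD
  haveI := Localization.essSurj (L := WC.Q) WC
  -- the unit of the localized adjunction is an isomorphism
  haveI hu : IsIso adj₀.unit := by
    have h0 : ∀ X : Dcat ⥤ S, IsIso (adj₀.unit.app (WD.Q.obj X)) := by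
      intro X
      haveI : IsIso (A.unit.app X) := by dsimp only [A]; infer_instance
      rw [show adj₀.unit.app (WD.Q.obj X) =
          WD.Q.map (A.unit.app X) ≫ (CatCommSq.iso res WC.Q WD.Q Res₀).hom.app
            ((ι.lan (H := S)).obj X) ≫
            Res₀.map ((CatCommSq.iso (ι.lan (H := S)) WD.Q WC.Q Lind₀).hom.app X) from
        A.localization_unit_app WD.Q WD WC.Q WC Lind₀ Res₀ X]
      infer_instance
    have : ∀ Y, IsIso (adj₀.unit.app Y) := by
      intro Y
      haveI := h0 (WD.Q.objPreimage Y)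
      exact isIso_app_of_iso adj₀.unit (WD.Q.objObjPreimageIso Y)
    exact NatIso.isIso_of_isIso_app _
  -- the counit of the localized adjunction is an isomorphism
  haveI hc : IsIso adj₀.counit := by
    have h0 : ∀ X : C ⥤ S, IsIso (adj₀.counit.app (WC.Q.obj X)) := by
      intro X
      haveI : IsIso (WC.Q.map (A.counit.app X)) :=
        Localization.inverts WC.Q WC _ (hcounit X)
      rw [show adj₀.counit.app (WC.Q.obj X) =
          Lind₀.map ((CatCommSq.iso res WC.Q WD.Q Res₀).inv.app X) ≫
            (CatCommSq.iso (ι.lan (H := S)) WD.Q WC.Q Lind₀).inv.app (res.obj X) ≫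
            WC.Q.map (A.counit.app X) from
        A.localization_counit_app WD.Q WD WC.Q WC Lind₀ Res₀ X]
      infer_instance
    have : ∀ Y, IsIso (adj₀.counit.app Y) := by
      intro Y
      haveI := h0 (WC.Q.objPreimage Y)
      exact isIso_app_of_iso adj₀.counit (WC.Q.objObjPreimageIso Y)
    exact NatIso.isIso_of_isIso_app _
  -- hence `Lind₀ ⊣ Res₀` is an adjoint equivalence
  let E : WD.Localization ≌ WC.Localization :=
    CategoryTheory.Equivalence.mk Lind₀ Res₀ (asIso adj₀.unit) (asIso adj₀.counit)
  haveI : Res₀.IsEquivalence := inferInstanceAs (E.inverse.IsEquivalence)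
  -- `Res` is isomorphic to `Res₀`, hence an equivalence
  haveI l1 : Localization.Lifting WC.Q WC (res ⋙ WD.Q) Res := ⟨hRes⟩
  let eRes : Res ≅ Res₀ :=
    Localization.liftNatIso WC.Q WC (res ⋙ WD.Q) (res ⋙ WD.Q) Res Res₀ (Iso.refl _)
  haveI : Res.IsEquivalence := Functor.isEquivalence_of_iso eRes.symm
  haveI : Lind.IsEquivalence := adj.isEquivalence_left_of_isEquivalence_right
  exact ⟨inferInstance, inferInstance, inferInstance⟩
end
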